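/- arXiv:1506.00603 — 5 statements merged into one kernel-verified Lean document; each statement's English description precedes it below -/
import Mathlib

section
/- Bounded affine permutations are in bijection with Grassmann necklaces: for a (k,n)-bounded affine permutation f and a ∈ {1,…,n}, define I_a(f) := { r ∈ {1,…,n} : r ≡ f(b) (mod n) for some integer b with b < a and f(b) ≥ a }. Then each I_a(f) has exactly k elements, the sequence I(f) := (I_1(f),…,I_n(f)) is a (k,n)-Grassmann necklace, and the map f ↦ I(f) is a bijection from the set of (k,n)-bounded affine permutations onto the set of (k,n)-Grassmann necklaces. -/
/-- A `(k,n)`-bounded affine permutation: a bijection `f : ℤ → ℤ` with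
`f(i+n) = f(i)+n`, `∑_{i=1}^n (f(i)−i) = kn`, and `i ≤ f(i) ≤ i+n` for all `i`. -/
def IsBAP (k n : ℕ) (f : ℤ → ℤ) : Prop :=
  Function.Bijective f ∧ (∀ i : ℤ, f (i + n) = f i + n) ∧
  (∑ i ∈ Finset.Icc (1 : ℤ) (n : ℤ), (f i - i)) = (k : ℤ) * n ∧
  (∀ i : ℤ, i ≤ f i ∧ f i ≤ i + n)

open scoped Classical in
/-- The Grassmann necklace of a bounded affine permutation:
`I_a(f) = { r ∈ {1,…,n} : r ≡ f(b) (mod n) for some b < a with f(b) ≥ a }`. -/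
noncomputable def necklaceOf (n : ℕ) (f : ℤ → ℤ) (a : ℤ) : Finset ℤ :=
  (Finset.Icc (1 : ℤ) (n : ℤ)).filter
    (fun r => ∃ b : ℤ, b < a ∧ a ≤ f b ∧ (n : ℤ) ∣ (f b - r))

/-- A `(k,n)`-Grassmann necklace, encoded as an `n`-periodic sequence of `k`-element
subsets of `{1,…,n}` satisfying the necklace conditions for `a ∈ {1,…,n}`. -/
def IsGN (k n : ℕ) (I : ℤ → Finset ℤ) : Prop :=
  (∀ a : ℤ, I (a + n) = I a) ∧
  (∀ a : ℤ, I a ⊆ Finset.Icc (1 : ℤ) (n : ℤ)) ∧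
  (∀ a : ℤ, (I a).card = k) ∧
  (∀ a ∈ Finset.Icc (1 : ℤ) (n : ℤ),
    (a ∉ I a → I (a + 1) = I a) ∧
    (a ∈ I a → ∃ a' ∈ Finset.Icc (1 : ℤ) (n : ℤ),
      I (a + 1) = insert a' ((I a).erase a)))



set_option linter.unusedVariables false
set_option linter.unusedSectionVars false
set_option linter.unusedTactic false

open Finset

namespace BAPGN

/-- representative of `a` in `[1,n]` modulo `n` -/
def resn (n : ℕ) (a : ℤ) : ℤ := 1 + (a - 1) % (n : ℤ)

variable {n : ℕ}

lemma resn_bounds (hn : 0 < n) (a : ℤ) : 1 ≤ resn n a ∧ resn n a ≤ (n : ℤ) := by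
  have h0 : (0:ℤ) < (n:ℤ) := by exact_mod_cast hn
  have h1 := Int.emod_nonneg (a-1) h0.ne'
  have h2 := Int.emod_lt_of_pos (a-1) h0
  unfold resn; omega

lemma resn_mem (hn : 0 < n) (a : ℤ) : resn n a ∈ Finset.Icc (1:ℤ) (n:ℤ) := by
  have := resn_bounds hn a; simp [Finset.mem_Icc]; omega

lemma resn_dvd (a : ℤ) : (n:ℤ) ∣ a - resn n a := by
  refine ⟨(a-1) / (n:ℤ), ?_⟩
  have := Int.mul_ediv_add_emod (a-1) (n:ℤ)
  unfold resn; linarith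

lemma window_eq (hn : 0 < n) {x y : ℤ} (hd : (n:ℤ) ∣ x - y) (h1 : -(n:ℤ) < x - y)
    (h2 : x - y < n) : x = y := by
  obtain ⟨t, ht⟩ := hd
  have h0 : (0:ℤ) < (n:ℤ) := by exact_mod_cast hn
  have : t = 0 := by
    rcases lt_trichotomy t 0 with h | h | h
    · nlinarith
    · exact h
    · nlinarith
  subst this; simp at ht; omega

lemma resn_congr (hn : 0 < n) {a b : ℤ} (h : (n:ℤ) ∣ a - b) : resn n a = resn n b := by
  have ha := resn_bounds hn a
  have hb := resn_bounds hn b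
  refine window_eq hn ?_ (by omega) (by omega)
  have d1 := resn_dvd (n := n) a
  have d2 := resn_dvd (n := n) b
  obtain ⟨t1, ht1⟩ := d1; obtain ⟨t2, ht2⟩ := d2; obtain ⟨t, ht⟩ := h
  exact ⟨t2 + t - t1, by linarith [ht1, ht2, ht]; ⟩

lemma resn_eq_self {a : ℤ} (h1 : 1 ≤ a) (h2 : a ≤ (n:ℤ)) : resn n a = a := by
  have : (a - 1) % (n:ℤ) = a - 1 := Int.emod_eq_of_lt (by omega) (by omega)
  unfold resn; omega

/-- uniqueness: congruent and both in `[1,n]` implies equal -/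
lemma resn_eq_of (hn : 0 < n) {a r : ℤ} (h1 : 1 ≤ r) (h2 : r ≤ (n:ℤ))
    (h : (n:ℤ) ∣ a - r) : resn n a = r := by
  rw [resn_congr hn h, resn_eq_self h1 h2]

lemma mem_necklace {f : ℤ → ℤ} {a r : ℤ} :
    r ∈ necklaceOf n f a ↔ (1 ≤ r ∧ r ≤ (n:ℤ)) ∧ ∃ b : ℤ, b < a ∧ a ≤ f b ∧ (n:ℤ) ∣ (f b - r) := by
  simp [necklaceOf, Finset.mem_filter, Finset.mem_Icc, and_assoc]

end BAPGN

open Finset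

namespace BAPGN

variable {n : ℕ} {f : ℤ → ℤ}

lemma shift_per (hper : ∀ i, f (i + n) = f i + n) :
    ∀ t : ℤ, (n:ℤ) ∣ t → ∀ i, f (i + t) = f i + t := by
  have key : ∀ s : ℤ, ∀ i, f (i + (n:ℤ) * s) = f i + (n:ℤ) * s := by
    intro s
    induction s using Int.induction_on with
    | zero => simp
    | succ m ih =>
      intro i
      have e1 : i + (n:ℤ) * ((m:ℤ) + 1) = (i + (n:ℤ) * (m:ℤ)) + (n:ℤ) := by ring
      rw [e1, hper, ih i]; ring
    | pred m ih =>
      intro i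
      have e1 : i + (n:ℤ) * (-(m:ℤ) - 1) + (n:ℤ) = i + (n:ℤ) * (-(m:ℤ)) := by ring
      have h1 := hper (i + (n:ℤ) * (-(m:ℤ) - 1))
      rw [e1, ih i] at h1
      have : f (i + (n:ℤ) * (-(m:ℤ) - 1)) = f i + (n:ℤ) * (-(m:ℤ) - 1) := by linarith
      exact this
  rintro t ⟨s, rfl⟩ i
  exact key s i

lemma neck_per (hper : ∀ i, f (i + n) = f i + n) (a : ℤ) :
    necklaceOf n f (a + n) = necklaceOf n f a := by
  apply Finset.ext; intro r
  rw [mem_necklace, mem_necklace]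
  constructor
  · rintro ⟨hr, b, hb1, hb2, hb3⟩
    have hb : f (b - n) = f b - n := by
      have h := hper (b - n); rw [show b - (n:ℤ) + n = b by ring] at h; linarith
    refine ⟨hr, b - n, by omega, by omega, ?_⟩
    obtain ⟨t, ht⟩ := hb3
    exact ⟨t - 1, by rw [hb]; linarith⟩
  · rintro ⟨hr, b, hb1, hb2, hb3⟩
    refine ⟨hr, b + n, by omega, by rw [hper]; omega, ?_⟩
    obtain ⟨t, ht⟩ := hb3
    exact ⟨t + 1, by rw [hper]; push_cast; linarith⟩

lemma mem_self_iff (hn : 0 < n) (hinj : Function.Injective f)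
    (hsurj : Function.Surjective f) (hlb : ∀ i, i ≤ f i) (hub : ∀ i, f i ≤ i + n) (a : ℤ) :
    resn n a ∈ necklaceOf n f a ↔ a < f a := by
  constructor
  · rintro h
    rw [mem_necklace] at h
    obtain ⟨hr, b, hb1, hb2, hb3⟩ := h
    have hd : (n:ℤ) ∣ f b - a := by
      obtain ⟨t, ht⟩ := hb3; obtain ⟨s, hs⟩ := resn_dvd (n := n) a
      exact ⟨t - s, by linarith⟩
    have hfb : f b = a := by
      refine window_eq hn hd (by omega) ?_
      have := hub b; omega
    by_contra hc
    have : f a = a := le_antisymm (by omega) (hlb a)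
    exact absurd (hinj (hfb.trans this.symm)) (by omega)
  · intro h
    obtain ⟨b, hb⟩ := hsurj a
    have hb1 : b ≤ a := by have := hlb b; omega
    have hb2 : b ≠ a := by rintro rfl; omega
    rw [mem_necklace]
    have hrb := resn_bounds hn a
    refine ⟨⟨hrb.1, hrb.2⟩, b, by omega, by omega, ?_⟩
    rw [hb]; exact resn_dvd a

lemma succ_id (hinj : Function.Injective f) {a : ℤ} (h : f a = a) :
    necklaceOf n f (a + 1) = necklaceOf n f a := by
  apply Finset.ext; intro r
  rw [mem_necklace, mem_necklace]
  constructor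
  · rintro ⟨hr, b, hb1, hb2, hb3⟩
    have hne : b ≠ a := by rintro rfl; omega
    exact ⟨hr, b, by omega, by omega, hb3⟩
  · rintro ⟨hr, b, hb1, hb2, hb3⟩
    have : f b ≠ a := by
      intro hc
      exact absurd (hinj (hc.trans h.symm)) (by omega)
    exact ⟨hr, b, by omega, by omega, hb3⟩

lemma succ_move (hn : 0 < n) (hinj : Function.Injective f)
    (hlb : ∀ i, i ≤ f i) (hub : ∀ i, f i ≤ i + n) {a : ℤ} (h : a < f a) :
    necklaceOf n f (a + 1)
      = insert (resn n (f a)) ((necklaceOf n f a).erase (resn n a)) := by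
  apply Finset.ext; intro r
  rw [Finset.mem_insert, Finset.mem_erase, mem_necklace, mem_necklace]
  constructor
  · rintro ⟨hr, b, hb1, hb2, hb3⟩
    rcases eq_or_lt_of_le (show b ≤ a by omega) with rfl | hba
    · exact Or.inl (resn_eq_of hn hr.1 hr.2 hb3).symm
    · refine Or.inr ⟨?_, hr, b, by omega, by omega, hb3⟩
      intro hc
      have hd : (n:ℤ) ∣ f b - a := by
        obtain ⟨t, ht⟩ := hb3; obtain ⟨s, hs⟩ := resn_dvd (n := n) a
        exact ⟨t - s, by rw [hc] at ht; linarith⟩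
      have : f b = a := by
        refine window_eq hn hd (by omega) ?_
        have := hub b; omega
      omega
  · rintro (rfl | ⟨hne, hr, b, hb1, hb2, hb3⟩)
    · have hrb := resn_bounds hn (f a)
      exact ⟨⟨hrb.1, hrb.2⟩, a, by omega, by omega, resn_dvd (f a)⟩
    · refine ⟨hr, b, by omega, ?_, hb3⟩
      rcases eq_or_lt_of_le hb2 with heq | hlt
      · exfalso
        apply hne
        exact (resn_eq_of hn hr.1 hr.2 (by rw [heq]; exact hb3)).symm
      · omega

lemma new_not_mem (hn : 0 < n) (hinj : Function.Injective f)
    (hub : ∀ i, f i ≤ i + n) {a : ℤ} (h1 : a < f a) (h2 : f a < a + n) :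
    resn n (f a) ∉ necklaceOf n f a := by
  rw [mem_necklace]
  rintro ⟨hr, b, hb1, hb2, hb3⟩
  have hd : (n:ℤ) ∣ f b - f a := by
    obtain ⟨t, ht⟩ := hb3; obtain ⟨s, hs⟩ := resn_dvd (n := n) (f a)
    exact ⟨t - s, by linarith⟩
  have : f b = f a := by
    refine window_eq hn hd (by omega) ?_
    have := hub b; omega
  exact absurd (hinj this) (by omega)

lemma wrap_iff (hn : 0 < n) (hlb : ∀ i, i ≤ f i) (hub : ∀ i, f i ≤ i + n) (a : ℤ) :
    resn n a ∈ necklaceOf n f (a + 1) ↔ f a = a + n := by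
  constructor
  · intro h
    rw [mem_necklace] at h
    obtain ⟨hr, b, hb1, hb2, hb3⟩ := h
    have hd : (n:ℤ) ∣ f b - (a + n) := by
      obtain ⟨t, ht⟩ := hb3; obtain ⟨s, hs⟩ := resn_dvd (n := n) a
      exact ⟨t - s - 1, by linarith⟩
    have hfb : f b = a + n := by
      refine window_eq hn hd ?_ ?_ <;> have := hub b <;> omega
    have : b = a := by have := hub b; have := hlb b; omega
    rw [← this, hfb, this]
  · intro h
    rw [mem_necklace]
    have hrb := resn_bounds hn a
    refine ⟨⟨hrb.1, hrb.2⟩, a, by omega, by omega, ?_⟩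
    obtain ⟨s, hs⟩ := resn_dvd (n := n) a
    exact ⟨s + 1, by rw [h]; linarith⟩

lemma card_neck_B (hn : 0 < n) (hinj : Function.Injective f)
    (hub : ∀ i, f i ≤ i + n) (a : ℤ) :
    ((Finset.Icc (a - n) (a-1)).filter (fun b => a ≤ f b)).card
      = (necklaceOf n f a).card := by
  classical
  refine Finset.card_bij (fun b _ => resn n (f b)) ?_ ?_ ?_
  · intro b hb
    rw [Finset.mem_filter, Finset.mem_Icc] at hb
    rw [mem_necklace]
    have hrb := resn_bounds hn (f b)
    exact ⟨⟨hrb.1, hrb.2⟩, b, by omega, hb.2, resn_dvd (f b)⟩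
  · intro b₁ hb₁ b₂ hb₂ heq
    rw [Finset.mem_filter, Finset.mem_Icc] at hb₁ hb₂
    have heq' : resn n (f b₁) = resn n (f b₂) := heq
    have hd : (n:ℤ) ∣ f b₁ - f b₂ := by
      obtain ⟨s, hs⟩ := resn_dvd (n := n) (f b₁)
      obtain ⟨t, ht⟩ := resn_dvd (n := n) (f b₂)
      exact ⟨s - t, by rw [heq'] at hs; linarith⟩
    have : f b₁ = f b₂ := by
      refine window_eq hn hd ?_ ?_ <;> [have := hub b₂; have := hub b₁] <;> omega
    exact hinj this
  · intro r hr
    rw [mem_necklace] at hr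
    obtain ⟨⟨hr1, hr2⟩, b, hb1, hb2, hb3⟩ := hr
    have hbm : b ∈ (Finset.Icc (a - n) (a-1)).filter (fun b => a ≤ f b) := by
      rw [Finset.mem_filter, Finset.mem_Icc]
      have := hub b; exact ⟨⟨by omega, by omega⟩, hb2⟩
    exact ⟨b, hbm, resn_eq_of hn hr1 hr2 hb3⟩

end BAPGN

open Finset

namespace BAPGN

variable {n k : ℕ} {f : ℤ → ℤ}

lemma card_succ (hn : 0 < n) (hinj : Function.Injective f) (hsurj : Function.Surjective f)
    (hlb : ∀ i, i ≤ f i) (hub : ∀ i, f i ≤ i + n) (a : ℤ) :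
    (necklaceOf n f (a+1)).card = (necklaceOf n f a).card := by
  rcases eq_or_lt_of_le (hlb a) with heq | hlt
  · rw [succ_id hinj heq.symm]
  · rw [succ_move hn hinj hlb hub hlt]
    have hmem : resn n a ∈ necklaceOf n f a :=
      (mem_self_iff hn hinj hsurj hlb hub a).2 hlt
    have hnot : resn n (f a) ∉ (necklaceOf n f a).erase (resn n a) := by
      rcases eq_or_lt_of_le (hub a) with heq2 | hlt2
      · have : resn n (f a) = resn n a :=
          resn_congr hn ⟨1, by rw [mul_one]; omega⟩
        rw [this]; exact Finset.notMem_erase _ _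
      · intro hc
        exact new_not_mem hn hinj hub hlt hlt2 (Finset.mem_erase.1 hc).2
    rw [Finset.card_insert_of_notMem hnot, Finset.card_erase_of_mem hmem]
    have : 0 < (necklaceOf n f a).card := Finset.card_pos.2 ⟨_, hmem⟩
    omega

lemma card_const (hn : 0 < n) (hinj : Function.Injective f) (hsurj : Function.Surjective f)
    (hlb : ∀ i, i ≤ f i) (hub : ∀ i, f i ≤ i + n) (a b : ℤ) :
    (necklaceOf n f a).card = (necklaceOf n f b).card := by
  have key : ∀ (m : ℕ) (c : ℤ), (necklaceOf n f (c + m)).card = (necklaceOf n f c).card := by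
    intro m
    induction m with
    | zero => intro c; simp
    | succ m ih =>
      intro c
      have e : c + ((m+1 : ℕ) : ℤ) = (c + m) + 1 := by push_cast; ring
      rw [e, card_succ hn hinj hsurj hlb hub, ih]
  rcases le_total a b with h | h
  · have e : b = a + ((b - a).toNat : ℤ) := by omega
    rw [e, key]
  · have e : a = b + ((a - b).toNat : ℤ) := by omega
    rw [e, key]

lemma sigma_eq {p q : (_ : ℤ) × ℤ} (h1 : p.1 = q.1) (h2 : p.2 = q.2) : p = q := by
  cases p; cases q; cases h1; cases h2; rfl

lemma sum_B (hn : 0 < n) (hper : ∀ i, f (i + n) = f i + n)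
    (hlb : ∀ i, i ≤ f i) (hub : ∀ i, f i ≤ i + n) :
    ∑ a ∈ Finset.Icc (1:ℤ) (n:ℤ), ((Finset.Icc (a - n) (a-1)).filter (fun b => a ≤ f b)).card
      = ∑ b ∈ Finset.Icc (1:ℤ) (n:ℤ), (Finset.Icc (b+1) (f b)).card := by
  classical
  rw [← Finset.card_sigma, ← Finset.card_sigma]
  have hshift : ∀ x y : ℤ, (n:ℤ) ∣ x - y → f x = f y + (x - y) := by
    intro x y hd
    have := shift_per hper (x - y) hd y
    rw [show y + (x - y) = x by ring] at this
    omega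
  have hdvd1 : ∀ x : ℤ, (n:ℤ) ∣ resn n x - x := by
    intro x
    obtain ⟨t, ht⟩ := resn_dvd (n := n) x
    exact ⟨-t, by linarith⟩
  refine Finset.card_bij' (fun p _ => ⟨resn n p.2, p.1 + (resn n p.2 - p.2)⟩)
    (fun p _ => ⟨resn n p.2, p.1 + (resn n p.2 - p.2)⟩) ?_ ?_ ?_ ?_
  · intro p hp
    rw [Finset.mem_sigma, Finset.mem_filter, Finset.mem_Icc, Finset.mem_Icc] at hp
    obtain ⟨⟨ha1, ha2⟩, ⟨hb1, hb2⟩, hfb⟩ := hp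
    rw [Finset.mem_sigma, Finset.mem_Icc, Finset.mem_Icc]
    dsimp only
    have hrb := resn_bounds hn p.2
    have hf : f (resn n p.2) = f p.2 + (resn n p.2 - p.2) := by
      have := hshift (resn n p.2) p.2 (hdvd1 p.2)
      linarith
    exact ⟨⟨hrb.1, hrb.2⟩, by omega, by omega⟩
  · intro p hp
    rw [Finset.mem_sigma, Finset.mem_Icc, Finset.mem_Icc] at hp
    obtain ⟨⟨hb1, hb2⟩, ha1, ha2⟩ := hp
    rw [Finset.mem_sigma, Finset.mem_filter, Finset.mem_Icc, Finset.mem_Icc]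
    dsimp only
    have hra := resn_bounds hn p.2
    have hf : f (p.1 + (resn n p.2 - p.2)) = f p.1 + (resn n p.2 - p.2) := by
      have := hshift (p.1 + (resn n p.2 - p.2)) p.1
        (by rw [show p.1 + (resn n p.2 - p.2) - p.1 = resn n p.2 - p.2 by ring]
            exact hdvd1 p.2)
      linarith
    have hubb := hub p.1
    exact ⟨⟨hra.1, hra.2⟩, ⟨by omega, by omega⟩, by omega⟩
  · intro p hp
    rw [Finset.mem_sigma, Finset.mem_filter, Finset.mem_Icc, Finset.mem_Icc] at hp
    obtain ⟨⟨ha1, ha2⟩, ⟨hb1, hb2⟩, hfb⟩ := hp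
    have h1 : resn n (p.1 + (resn n p.2 - p.2)) = p.1 := by
      refine resn_eq_of hn ha1 ha2 ?_
      rw [show p.1 + (resn n p.2 - p.2) - p.1 = resn n p.2 - p.2 by ring]
      exact hdvd1 p.2
    refine sigma_eq ?_ ?_ <;> dsimp only
    · exact h1
    · rw [h1]; ring
  · intro p hp
    rw [Finset.mem_sigma, Finset.mem_Icc, Finset.mem_Icc] at hp
    obtain ⟨⟨hb1, hb2⟩, ha1, ha2⟩ := hp
    have h1 : resn n (p.1 + (resn n p.2 - p.2)) = p.1 := by
      refine resn_eq_of hn hb1 hb2 ?_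
      rw [show p.1 + (resn n p.2 - p.2) - p.1 = resn n p.2 - p.2 by ring]
      exact hdvd1 p.2
    refine sigma_eq ?_ ?_ <;> dsimp only
    · exact h1
    · rw [h1]; ring

lemma card_k (hn : 0 < n) (hf : IsBAP k n f) (a : ℤ) : (necklaceOf n f a).card = k := by
  obtain ⟨⟨hinj, hsurj⟩, hper, hsum, hbnd⟩ := hf
  have hlb : ∀ i, i ≤ f i := fun i => (hbnd i).1
  have hub : ∀ i, f i ≤ i + n := fun i => (hbnd i).2
  have h1 : ∀ b : ℤ, ((Finset.Icc (b+1) (f b)).card : ℤ) = f b - b := by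
    intro b
    rw [Int.card_Icc]
    have := hlb b; omega
  have h2 : (∑ a ∈ Finset.Icc (1:ℤ) (n:ℤ),
      (((Finset.Icc (a - n) (a-1)).filter (fun b => a ≤ f b)).card : ℤ)) = (k:ℤ) * n := by
    rw [← Nat.cast_sum, sum_B hn hper hlb hub, Nat.cast_sum]
    rw [Finset.sum_congr rfl (fun b _ => h1 b)]
    exact hsum
  have h3 : ∀ c ∈ Finset.Icc (1:ℤ) (n:ℤ),
      (((Finset.Icc (c - n) (c-1)).filter (fun b => c ≤ f b)).card : ℤ)
        = ((necklaceOf n f 1).card : ℤ) := by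
    intro c _
    have e1 := card_neck_B hn hinj hub c
    have e2 := card_const hn hinj hsurj hlb hub c 1
    rw [e1, e2]
  rw [Finset.sum_congr rfl h3, Finset.sum_const, Int.card_Icc] at h2
  have hcard : (((n:ℤ) + 1 - 1).toNat : ℤ) = (n:ℤ) := by omega
  rw [nsmul_eq_mul, hcard] at h2
  have hcast : ((necklaceOf n f 1).card : ℤ) = (k:ℤ) := by
    have hn' : (n:ℤ) ≠ 0 := by exact_mod_cast hn.ne'
    have := mul_right_cancel₀ hn' (by linarith [h2] : ((necklaceOf n f 1).card : ℤ) * n = (k:ℤ) * n)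
    exact this
  have : (necklaceOf n f 1).card = k := by exact_mod_cast hcast
  rw [card_const hn hinj hsurj hlb hub a 1, this]

lemma isGN_of_bap (hn : 0 < n) (hf : IsBAP k n f) : IsGN k n (necklaceOf n f) := by
  have hcard := card_k hn hf
  obtain ⟨⟨hinj, hsurj⟩, hper, hsum, hbnd⟩ := hf
  have hlb : ∀ i, i ≤ f i := fun i => (hbnd i).1
  have hub : ∀ i, f i ≤ i + n := fun i => (hbnd i).2
  refine ⟨fun a => neck_per hper a, fun a r hr => ?_, hcard, ?_⟩
  · rw [mem_necklace] at hr
    rw [Finset.mem_Icc]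
    exact ⟨hr.1.1, hr.1.2⟩
  intro a ha
  rw [Finset.mem_Icc] at ha
  have hres : resn n a = a := resn_eq_self ha.1 ha.2
  constructor
  · intro hnot
    have hnlt : ¬ a < f a := by
      intro h
      have := (mem_self_iff hn hinj hsurj hlb hub a).2 h
      rw [hres] at this
      exact hnot this
    exact succ_id hinj (le_antisymm (by omega) (hlb a))
  · intro hmem
    have hlt : a < f a := by
      refine (mem_self_iff hn hinj hsurj hlb hub a).1 ?_
      rw [hres]; exact hmem
    have hmove := succ_move hn hinj hlb hub hlt
    rw [hres] at hmove
    exact ⟨resn n (f a), resn_mem hn _, hmove⟩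

lemma neck_inj (hn : 0 < n) {g : ℤ → ℤ} (hf : IsBAP k n f) (hg : IsBAP k n g)
    (h : necklaceOf n f = necklaceOf n g) : f = g := by
  obtain ⟨⟨hinjf, hsurjf⟩, hperf, _, hbndf⟩ := hf
  obtain ⟨⟨hinjg, hsurjg⟩, hperg, _, hbndg⟩ := hg
  have hlbf : ∀ i, i ≤ f i := fun i => (hbndf i).1
  have hubf : ∀ i, f i ≤ i + n := fun i => (hbndf i).2
  have hlbg : ∀ i, i ≤ g i := fun i => (hbndg i).1
  have hubg : ∀ i, g i ≤ i + n := fun i => (hbndg i).2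
  have hF : ∀ a : ℤ, ∀ P : Finset ℤ → Prop, P (necklaceOf n f a) → P (necklaceOf n g a) := by
    intro a P hP; rw [← congrFun h a]; exact hP
  have main : ∀ a : ℤ, 1 ≤ a → a ≤ (n:ℤ) → f a = g a := by
    intro a ha1 ha2
    have hres : resn n a = a := resn_eq_self ha1 ha2
    -- trichotomy for f a
    rcases eq_or_lt_of_le (hlbf a) with heqf | hltf
    · -- f a = a
      have h1 : resn n a ∉ necklaceOf n f a := by
        rw [mem_self_iff hn hinjf hsurjf hlbf hubf a]; omega
      have h2 : resn n a ∉ necklaceOf n g a := by rw [← congrFun h a]; exact h1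
      rw [mem_self_iff hn hinjg hsurjg hlbg hubg a] at h2
      have := hlbg a; omega
    rcases eq_or_lt_of_le (hubf a) with heqf2 | hltf2
    · -- f a = a + n
      have h1 : resn n a ∈ necklaceOf n f (a+1) := (wrap_iff hn hlbf hubf a).2 heqf2
      have h2 : resn n a ∈ necklaceOf n g (a+1) := by rw [← congrFun h (a+1)]; exact h1
      rw [wrap_iff hn hlbg hubg a] at h2
      omega
    -- a < f a < a + n
    have hgup : a < g a := by
      rcases eq_or_lt_of_le (hlbg a) with heqg | hltg
      · exfalso
        have h1 : resn n a ∉ necklaceOf n g a := by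
          rw [mem_self_iff hn hinjg hsurjg hlbg hubg a]; omega
        have h2 : resn n a ∉ necklaceOf n f a := by rw [congrFun h a]; exact h1
        rw [mem_self_iff hn hinjf hsurjf hlbf hubf a] at h2
        omega
      · exact hltg
    have hgub : g a < a + n := by
      rcases eq_or_lt_of_le (hubg a) with heqg2 | hltg2
      · exfalso
        have h1 : resn n a ∈ necklaceOf n g (a+1) := (wrap_iff hn hlbg hubg a).2 heqg2
        have h2 : resn n a ∈ necklaceOf n f (a+1) := by rw [congrFun h (a+1)]; exact h1
        rw [wrap_iff hn hlbf hubf a] at h2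
        omega
      · exact hltg2
    -- both strict moves
    have hrf1 : resn n (f a) ∈ necklaceOf n f (a+1) := by
      rw [succ_move hn hinjf hlbf hubf hltf]
      exact Finset.mem_insert_self _ _
    have hrf2 : resn n (f a) ∉ necklaceOf n f a := new_not_mem hn hinjf hubf hltf hltf2
    have hg1 : resn n (f a) ∈ necklaceOf n g (a+1) := by rw [← congrFun h (a+1)]; exact hrf1
    have hg2 : resn n (f a) ∉ necklaceOf n g a := by rw [← congrFun h a]; exact hrf2
    rw [succ_move hn hinjg hlbg hubg hgup, Finset.mem_insert, Finset.mem_erase] at hg1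
    have hre : resn n (f a) = resn n (g a) := by
      rcases hg1 with h' | h'
      · exact h'
      · exact absurd h'.2 hg2
    have hd : (n:ℤ) ∣ f a - g a := by
      obtain ⟨s, hs⟩ := resn_dvd (n := n) (f a)
      obtain ⟨t, ht⟩ := resn_dvd (n := n) (g a)
      exact ⟨s - t, by rw [hre] at hs; linarith⟩
    exact window_eq hn hd (by omega) (by omega)
  funext i
  have hres := resn_bounds hn i
  have hd := resn_dvd (n := n) i
  have hf' : f (resn n i + (i - resn n i)) = f (resn n i) + (i - resn n i) :=
    shift_per hperf (i - resn n i) hd _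
  have hg' : g (resn n i + (i - resn n i)) = g (resn n i) + (i - resn n i) :=
    shift_per hperg (i - resn n i) hd _
  rw [show resn n i + (i - resn n i) = i by ring] at hf' hg'
  rw [hf', hg', main (resn n i) hres.1 hres.2]

end BAPGN

open Finset

namespace BAPGN

variable {n k : ℕ} {I : ℤ → Finset ℤ}

/-- periodic extension helper -/
lemma per_shift {α : Sort*} {g : ℤ → α} (hper : ∀ i : ℤ, g (i + n) = g i) :
    ∀ t : ℤ, (n:ℤ) ∣ t → ∀ i, g (i + t) = g i := by
  have key : ∀ s : ℤ, ∀ i, g (i + (n:ℤ) * s) = g i := by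
    intro s
    induction s using Int.induction_on with
    | zero => simp
    | succ m ih =>
      intro i
      have e1 : i + (n:ℤ) * ((m:ℤ) + 1) = (i + (n:ℤ) * (m:ℤ)) + (n:ℤ) := by ring
      rw [e1, hper, ih i]
    | pred m ih =>
      intro i
      have e1 : i + (n:ℤ) * (-(m:ℤ) - 1) + (n:ℤ) = i + (n:ℤ) * (-(m:ℤ)) := by ring
      have h1 := hper (i + (n:ℤ) * (-(m:ℤ) - 1))
      rw [e1, ih i] at h1
      exact h1.symm
  rintro t ⟨s, rfl⟩ i
  exact key s i

/-- the candidate inverse map: a bounded affine permutation from a Grassmann necklace -/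
def fGN (n : ℕ) (I : ℤ → Finset ℤ) (a : ℤ) : ℤ :=
  if resn n a ∈ I (resn n a) then
    (if resn n a ∈ I (resn n a + 1) then a + n
     else a + resn n ((∑ x ∈ I (resn n a + 1) \ I (resn n a), x) - resn n a))
  else a

section GN

variable (hn : 0 < n) (hI : IsGN k n I)
include hn hI

lemma Ires (a : ℤ) : I (resn n a) = I a := by
  have := per_shift (n := n) (g := I) hI.1 (a - resn n a) (resn_dvd a) (resn n a)
  rw [show resn n a + (a - resn n a) = a by ring] at this
  exact this.symm

lemma Ires1 (a : ℤ) : I (resn n a + 1) = I (a + 1) := by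
  have := per_shift (n := n) (g := I) hI.1 (a - resn n a) (resn_dvd a) (resn n a + 1)
  rw [show resn n a + 1 + (a - resn n a) = a + 1 by ring] at this
  exact this.symm

lemma G1 {a : ℤ} (h : resn n a ∉ I (resn n a)) :
    fGN n I a = a ∧ I (a + 1) = I a := by
  constructor
  · unfold fGN; rw [if_neg h]
  · have h1 := (hI.2.2.2 (resn n a) (resn_mem hn a)).1 h
    rw [← Ires1 hn hI a, h1, Ires hn hI a]

lemma G2 {a : ℤ} (h1 : resn n a ∈ I (resn n a)) (h2 : resn n a ∈ I (resn n a + 1)) :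
    fGN n I a = a + n ∧ I (a + 1) = I a := by
  constructor
  · unfold fGN; rw [if_pos h1, if_pos h2]
  · obtain ⟨a'', _, heq⟩ := (hI.2.2.2 (resn n a) (resn_mem hn a)).2 h1
    have ha'' : a'' = resn n a := by
      rw [heq] at h2
      rcases Finset.mem_insert.1 h2 with h | h
      · exact h.symm
      · exact absurd (Finset.mem_erase.1 h).1 (by simp)
    rw [ha''] at heq
    rw [Finset.insert_erase h1] at heq
    rw [← Ires1 hn hI a, heq, Ires hn hI a]

lemma G3 {a : ℤ} (h1 : resn n a ∈ I (resn n a)) (h2 : resn n a ∉ I (resn n a + 1)) :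
    ∃ a', (1 ≤ a' ∧ a' ≤ (n:ℤ)) ∧ a' ∉ I a ∧ a' ≠ resn n a ∧
      I (a + 1) = insert a' ((I a).erase (resn n a)) ∧
      fGN n I a = a + resn n (a' - resn n a) ∧
      (n:ℤ) ∣ fGN n I a - a' ∧ a < fGN n I a ∧ fGN n I a < a + n := by
  obtain ⟨a', ha'Icc, heq⟩ := (hI.2.2.2 (resn n a) (resn_mem hn a)).2 h1
  rw [Finset.mem_Icc] at ha'Icc
  have hne : a' ≠ resn n a := by
    rintro rfl
    exact h2 (heq ▸ Finset.mem_insert_self _ _)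
  have hnotmem : a' ∉ I (resn n a) := by
    intro hc
    have : insert a' ((I (resn n a)).erase (resn n a)) = (I (resn n a)).erase (resn n a) :=
      Finset.insert_eq_self.2 (Finset.mem_erase.2 ⟨hne, hc⟩)
    have hc1 := hI.2.2.1 (resn n a + 1)
    have hc2 := hI.2.2.1 (resn n a)
    rw [heq, this, Finset.card_erase_of_mem h1, hc2] at hc1
    have hk : 0 < k := by
      rw [← hc2]; exact Finset.card_pos.2 ⟨_, h1⟩
    omega
  have hsdiff : I (resn n a + 1) \ I (resn n a) = {a'} := by
    apply Finset.ext; intro x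
    rw [Finset.mem_sdiff, Finset.mem_singleton, heq, Finset.mem_insert, Finset.mem_erase]
    constructor
    · rintro ⟨h | h, hx⟩
      · exact h
      · exact absurd h.2 hx
    · rintro rfl
      exact ⟨Or.inl rfl, hnotmem⟩
  have hval : fGN n I a = a + resn n (a' - resn n a) := by
    unfold fGN
    rw [if_pos h1, if_neg h2, hsdiff, Finset.sum_singleton]
  have hrb := resn_bounds hn (a' - resn n a)
  have hrba := resn_bounds hn a
  have hltn : resn n (a' - resn n a) < (n:ℤ) := by
    rcases eq_or_lt_of_le hrb.2 with heqn | h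
    · exfalso
      obtain ⟨t, ht⟩ := resn_dvd (n := n) (a' - resn n a)
      have hd : (n:ℤ) ∣ a' - resn n a := ⟨t + 1, by rw [heqn] at ht; linarith⟩
      exact hne (window_eq hn hd (by omega) (by omega))
    · exact h
  have hdvd : (n:ℤ) ∣ fGN n I a - a' := by
    obtain ⟨s, hs⟩ := resn_dvd (n := n) a
    obtain ⟨t, ht⟩ := resn_dvd (n := n) (a' - resn n a)
    exact ⟨s - t, by rw [hval]; linarith⟩
  refine ⟨a', ⟨ha'Icc.1, ha'Icc.2⟩, ?_, hne, ?_, hval, hdvd, by omega, by omega⟩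
  · rw [← Ires hn hI a]; exact hnotmem
  · rw [← Ires1 hn hI a, heq, Ires hn hI a]

lemma Gbnd (a : ℤ) : a ≤ fGN n I a ∧ fGN n I a ≤ a + n := by
  by_cases h1 : resn n a ∈ I (resn n a)
  · by_cases h2 : resn n a ∈ I (resn n a + 1)
    · rw [(G2 hn hI h1 h2).1]; omega
    · obtain ⟨a', _, _, _, _, hval, _, hb1, hb2⟩ := G3 hn hI h1 h2
      omega
  · rw [(G1 hn hI h1).1]; omega

lemma Gshift (a : ℤ) : fGN n I (a + n) = fGN n I a + n := by
  have hres : resn n (a + n) = resn n a :=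
    resn_congr hn ⟨1, by rw [mul_one]; ring⟩
  unfold fGN
  rw [hres]
  split_ifs <;> ring

lemma Gshift' : ∀ t : ℤ, (n:ℤ) ∣ t → ∀ a, fGN n I (a + t) = fGN n I a + t :=
  shift_per (Gshift hn hI)

lemma Gkeep {r c : ℤ} (h : r ∈ I c) (hne : r ≠ resn n c) : r ∈ I (c + 1) := by
  by_cases h1 : resn n c ∈ I (resn n c)
  · by_cases h2 : resn n c ∈ I (resn n c + 1)
    · rw [(G2 hn hI h1 h2).2]; exact h
    · obtain ⟨a', _, _, _, heq, _⟩ := G3 hn hI h1 h2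
      rw [heq]
      exact Finset.mem_insert_of_mem (Finset.mem_erase.2 ⟨hne, h⟩)
  · rw [(G1 hn hI h1).2]; exact h

lemma Gback {r c : ℤ} (h1 : r ∈ I (c + 1)) (h2 : r ∉ I c) :
    (n:ℤ) ∣ fGN n I c - r ∧ c < fGN n I c ∧ fGN n I c < c + n := by
  by_cases hc1 : resn n c ∈ I (resn n c)
  · by_cases hc2 : resn n c ∈ I (resn n c + 1)
    · rw [(G2 hn hI hc1 hc2).2] at h1; exact absurd h1 h2
    · obtain ⟨a', _, hnm, _, heq, hval, hdvd, hb1, hb2⟩ := G3 hn hI hc1 hc2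
      rw [heq, Finset.mem_insert, Finset.mem_erase] at h1
      rcases h1 with rfl | h1
      · exact ⟨hdvd, hb1, hb2⟩
      · exact absurd h1.2 h2
  · rw [(G1 hn hI hc1).2] at h1; exact absurd h1 h2

lemma Gfwd {c : ℤ} (h : c < fGN n I c) : resn n (fGN n I c) ∈ I (c + 1) := by
  by_cases hc1 : resn n c ∈ I (resn n c)
  · by_cases hc2 : resn n c ∈ I (resn n c + 1)
    · obtain ⟨hval, heq⟩ := G2 hn hI hc1 hc2
      have : resn n (fGN n I c) = resn n c := by
        rw [hval]
        exact resn_congr hn ⟨1, by rw [mul_one]; ring⟩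
      rw [this, heq]
      rw [← Ires hn hI c] at *
      rw [Ires1 hn hI c] at hc2
      rw [heq] at hc2  -- hc2 : resn n c ∈ I c after rewriting? fix below
      exact hc2
    · obtain ⟨a', ha'b, _, _, heq, hval, hdvd, _, _⟩ := G3 hn hI hc1 hc2
      have : resn n (fGN n I c) = a' := resn_eq_of hn ha'b.1 ha'b.2 hdvd
      rw [this, heq]
      exact Finset.mem_insert_self _ _
  · rw [(G1 hn hI hc1).1] at h; omega

lemma Gdrop {r : ℤ} : ∀ (m : ℕ) (c : ℤ), r ∈ I c → r ∉ I (c + (m:ℤ)) →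
    ∃ e, c ≤ e ∧ e < c + (m:ℤ) ∧ resn n e = r := by
  intro m
  induction m with
  | zero => intro c h1 h2; simp at h2; exact absurd h1 h2
  | succ m ih =>
    intro c h1 h2
    by_cases hc : r ∈ I (c + 1)
    · have e1 : c + ((m+1:ℕ):ℤ) = (c + 1) + (m:ℤ) := by push_cast; ring
      rw [e1] at h2
      obtain ⟨e, he1, he2, he3⟩ := ih (c+1) hc h2
      exact ⟨e, by omega, by push_cast; omega, he3⟩
    · refine ⟨c, le_refl c, by push_cast; omega, ?_⟩
      by_contra hne
      exact hc (Gkeep hn hI h1 (fun h => hne h.symm))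

lemma Gdrop' {r c d : ℤ} (hcd : c ≤ d) (h1 : r ∈ I c) (h2 : r ∉ I d) :
    ∃ e, c ≤ e ∧ e < d ∧ resn n e = r := by
  have e1 : c + (((d - c).toNat : ℕ) : ℤ) = d := by omega
  rw [← e1] at h2
  obtain ⟨e, he1, he2, he3⟩ := Gdrop hn hI _ c h1 h2
  exact ⟨e, he1, by omega, he3⟩

end GN

end BAPGN

open Finset

namespace BAPGN

variable {n k : ℕ} {I : ℤ → Finset ℤ}

section GN

variable (hn : 0 < n) (hI : IsGN k n I)
include hn hI

lemma Gtri (x : ℤ) :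
    (fGN n I x = x ∧ resn n x ∉ I x)
    ∨ (fGN n I x = x + n ∧ resn n x ∈ I (x+1))
    ∨ (∃ a', (1 ≤ a' ∧ a' ≤ (n:ℤ)) ∧ a' ∉ I x ∧ a' ∈ I (x+1) ∧ (n:ℤ) ∣ fGN n I x - a') := by
  by_cases h1 : resn n x ∈ I (resn n x)
  · by_cases h2 : resn n x ∈ I (resn n x + 1)
    · right; left
      exact ⟨(G2 hn hI h1 h2).1, by rw [← Ires1 hn hI x]; exact h2⟩
    · right; right
      obtain ⟨a', hb, hnm, hne, heq, hval, hdvd, _, _⟩ := G3 hn hI h1 h2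
      exact ⟨a', hb, hnm, heq ▸ Finset.mem_insert_self _ _, hdvd⟩
  · left
    exact ⟨(G1 hn hI h1).1, by rw [← Ires hn hI x]; exact h1⟩

lemma Gresinj (a b : ℤ) (hd : (n:ℤ) ∣ fGN n I a - fGN n I b) : (n:ℤ) ∣ a - b := by
  by_contra hnd
  set c := a + resn n (b - a) with hcdef
  have hrb := resn_bounds hn (b - a)
  have hrne : resn n (b - a) ≠ (n:ℤ) := by
    intro h
    obtain ⟨t, ht⟩ := resn_dvd (n := n) (b - a)
    exact hnd ⟨-(t+1), by rw [h] at ht; linarith⟩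
  have hc1 : a < c := by omega
  have hc2 : c < a + n := by omega
  have hcb : (n:ℤ) ∣ c - b := by
    obtain ⟨t, ht⟩ := resn_dvd (n := n) (b - a)
    exact ⟨-t, by rw [hcdef]; linarith⟩
  have hfc : fGN n I c = fGN n I b + (c - b) := by
    have := Gshift' hn hI (c - b) hcb b
    rw [show b + (c - b) = c by ring] at this
    exact this
  have hd' : (n:ℤ) ∣ fGN n I a - fGN n I c := by
    obtain ⟨s, hs⟩ := hd; obtain ⟨t, ht⟩ := hcb
    exact ⟨s - t, by rw [hfc]; linarith⟩
  have hIa : I (a + (n:ℤ)) = I a := hI.1 a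
  -- helper to go from resn e = resn x to n ∣ e - x
  have hres_dvd : ∀ e x : ℤ, resn n e = resn n x → (n:ℤ) ∣ e - x := by
    intro e x h
    have hh := dvd_sub (resn_dvd (n := n) e) (resn_dvd (n := n) x)
    rw [h] at hh
    rw [show e - resn n x - (x - resn n x) = e - x by ring] at hh
    exact hh
  rcases Gtri hn hI a with ⟨hfa, hma⟩ | ⟨hfa, hma⟩ | ⟨r, hrb', hr1, hr2, hrd⟩
  · rcases Gtri hn hI c with ⟨hfc', hmc⟩ | ⟨hfc', hmc⟩ | ⟨s, hsb, hs1, hs2, hsd⟩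
    · -- both case 1 : n ∣ a - c, contra
      rw [hfa, hfc'] at hd'
      exact absurd (window_eq hn hd' (by omega) (by omega)) (by omega)
    · rw [hfa, hfc'] at hd'
      have : (n:ℤ) ∣ a - c := by
        obtain ⟨t, ht⟩ := hd'; exact ⟨t + 1, by linarith⟩
      exact absurd (window_eq hn this (by omega) (by omega)) (by omega)
    · -- a case1, c case3 with inserted element s ; s = resn a
      have hda : (n:ℤ) ∣ a - s := by
        obtain ⟨t1, ht1⟩ := hd'; obtain ⟨t2, ht2⟩ := hsd
        exact ⟨t1 + t2, by rw [hfa] at ht1; linarith⟩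
      have hsa : resn n a = s := resn_eq_of hn hsb.1 hsb.2 hda
      rw [hsa] at hma
      have hma' : s ∉ I (a + (n:ℤ)) := by rw [hIa]; exact hma
      obtain ⟨e, he1, he2, he3⟩ := Gdrop' hn hI (by omega : c + 1 ≤ a + (n:ℤ)) hs2 hma'
      have hde : (n:ℤ) ∣ e - a := by
        have := hres_dvd e a (by rw [he3, hsa])
        exact this
      exact absurd (window_eq hn hde (by omega) (by omega)) (by omega)
  · rcases Gtri hn hI c with ⟨hfc', hmc⟩ | ⟨hfc', hmc⟩ | ⟨s, hsb, hs1, hs2, hsd⟩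
    · rw [hfa, hfc'] at hd'
      have : (n:ℤ) ∣ a - c := by
        obtain ⟨t, ht⟩ := hd'; exact ⟨t - 1, by linarith⟩
      exact absurd (window_eq hn this (by omega) (by omega)) (by omega)
    · rw [hfa, hfc'] at hd'
      have : (n:ℤ) ∣ a - c := by
        obtain ⟨t, ht⟩ := hd'; exact ⟨t, by linarith⟩
      exact absurd (window_eq hn this (by omega) (by omega)) (by omega)
    · -- a case2, c case3 ; s = resn a
      have hda : (n:ℤ) ∣ a - s := by
        obtain ⟨t1, ht1⟩ := hd'; obtain ⟨t2, ht2⟩ := hsd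
        exact ⟨t1 + t2 - 1, by rw [hfa] at ht1; linarith⟩
      have hsa : resn n a = s := resn_eq_of hn hsb.1 hsb.2 hda
      rw [hsa] at hma
      obtain ⟨e, he1, he2, he3⟩ := Gdrop' hn hI (by omega : a + 1 ≤ c) hma hs1
      have hde : (n:ℤ) ∣ e - a := hres_dvd e a (by rw [he3, hsa])
      exact absurd (window_eq hn hde (by omega) (by omega)) (by omega)
  · rcases Gtri hn hI c with ⟨hfc', hmc⟩ | ⟨hfc', hmc⟩ | ⟨s, hsb, hs1, hs2, hsd⟩
    · -- a case3, c case1 ; r = resn c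
      have hdc : (n:ℤ) ∣ c - r := by
        obtain ⟨t1, ht1⟩ := hd'; obtain ⟨t2, ht2⟩ := hrd
        exact ⟨t2 - t1, by rw [hfc'] at ht1; linarith⟩
      have hrc : resn n c = r := resn_eq_of hn hrb'.1 hrb'.2 hdc
      rw [hrc] at hmc
      obtain ⟨e, he1, he2, he3⟩ := Gdrop' hn hI (by omega : a + 1 ≤ c) hr2 hmc
      have hde : (n:ℤ) ∣ e - c := hres_dvd e c (by rw [he3, hrc])
      exact absurd (window_eq hn hde (by omega) (by omega)) (by omega)
    · -- a case3, c case2 ; r = resn c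
      have hdc : (n:ℤ) ∣ c - r := by
        obtain ⟨t1, ht1⟩ := hd'; obtain ⟨t2, ht2⟩ := hrd
        exact ⟨t2 - t1 - 1, by rw [hfc'] at ht1; linarith⟩
      have hrc : resn n c = r := resn_eq_of hn hrb'.1 hrb'.2 hdc
      rw [hrc] at hmc
      have hr1' : r ∉ I (a + (n:ℤ)) := by rw [hIa]; exact hr1
      obtain ⟨e, he1, he2, he3⟩ := Gdrop' hn hI (by omega : c + 1 ≤ a + (n:ℤ)) hmc hr1'
      have hde : (n:ℤ) ∣ e - c := hres_dvd e c (by rw [he3, hrc])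
      exact absurd (window_eq hn hde (by omega) (by omega)) (by omega)
    · -- both case3
      have hdrs : (n:ℤ) ∣ r - s := by
        obtain ⟨t1, ht1⟩ := hd'; obtain ⟨t2, ht2⟩ := hrd; obtain ⟨t3, ht3⟩ := hsd
        exact ⟨t3 - t2 + t1, by linarith⟩
      have hrs : r = s := window_eq hn hdrs (by omega) (by omega)
      subst hrs
      obtain ⟨e1, he11, he12, he13⟩ := Gdrop' hn hI (by omega : a + 1 ≤ c) hr2 hs1
      have hr1' : r ∉ I (a + (n:ℤ)) := by rw [hIa]; exact hr1
      obtain ⟨e2, he21, he22, he23⟩ := Gdrop' hn hI (by omega : c + 1 ≤ a + (n:ℤ)) hs2 hr1'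
      have hde : (n:ℤ) ∣ e1 - e2 := hres_dvd e1 e2 (by rw [he13, he23])
      exact absurd (window_eq hn hde (by omega) (by omega)) (by omega)

lemma Ginj : Function.Injective (fGN n I) := by
  intro x y h
  have hd : (n:ℤ) ∣ x - y := Gresinj hn hI x y (by rw [h]; simp)
  obtain ⟨t, ht⟩ := hd
  have hs := Gshift' hn hI ((n:ℤ)*t) ⟨t, rfl⟩ y
  rw [show y + (n:ℤ)*t = x by linarith] at hs
  have hnt : (n:ℤ)*t = 0 := by rw [h] at hs; linarith
  have hn' : (n:ℤ) ≠ 0 := by exact_mod_cast hn.ne'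
  have ht0 : t = 0 := by
    rcases mul_eq_zero.1 hnt with h' | h'
    · exact absurd h' hn'
    · exact h'
  rw [ht0, mul_zero] at ht
  omega

lemma Gsurj : Function.Surjective (fGN n I) := by
  have himg : (Finset.Icc (1:ℤ) (n:ℤ)).image (fun x => resn n (fGN n I x))
      = Finset.Icc (1:ℤ) (n:ℤ) := by
    apply Finset.eq_of_subset_of_card_le
    · intro r hr
      rw [Finset.mem_image] at hr
      obtain ⟨x, _, rfl⟩ := hr
      exact resn_mem hn _
    · have hcard : ((Finset.Icc (1:ℤ) (n:ℤ)).image (fun x => resn n (fGN n I x))).card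
          = (Finset.Icc (1:ℤ) (n:ℤ)).card := by
        apply Finset.card_image_of_injOn
        intro x hx y hy hxy
        simp only [Finset.coe_Icc, Set.mem_Icc] at hx hy
        have hxy' : resn n (fGN n I x) = resn n (fGN n I y) := hxy
        have hd1 : (n:ℤ) ∣ fGN n I x - fGN n I y := by
          have hh := dvd_sub (resn_dvd (n := n) (fGN n I x)) (resn_dvd (n := n) (fGN n I y))
          rw [hxy'] at hh
          rw [show fGN n I x - resn n (fGN n I y) - (fGN n I y - resn n (fGN n I y))
              = fGN n I x - fGN n I y by ring] at hh
          exact hh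
        have := Gresinj hn hI x y hd1
        exact window_eq hn this (by omega) (by omega)
      exact le_of_eq hcard.symm
  intro y
  have hy : resn n y ∈ (Finset.Icc (1:ℤ) (n:ℤ)).image (fun x => resn n (fGN n I x)) := by
    rw [himg]; exact resn_mem hn y
  rw [Finset.mem_image] at hy
  obtain ⟨x, _, hfx⟩ := hy
  have hdxy : (n:ℤ) ∣ y - fGN n I x := by
    have hh := dvd_sub (resn_dvd (n := n) y) (resn_dvd (n := n) (fGN n I x))
    rw [hfx] at hh
    rw [show y - resn n y - (fGN n I x - resn n y) = y - fGN n I x by ring] at hh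
    exact hh
  refine ⟨x + (y - fGN n I x), ?_⟩
  rw [Gshift' hn hI (y - fGN n I x) hdxy x]
  ring

lemma Gneck : necklaceOf n (fGN n I) = I := by
  funext a
  apply Finset.ext; intro r
  rw [mem_necklace]
  constructor
  · rintro ⟨⟨hr1, hr2⟩, b, hb1, hb2, hb3⟩
    have hbf : b < fGN n I b := lt_of_lt_of_le hb1 hb2
    have h4 := Gfwd hn hI hbf
    have hre : resn n (fGN n I b) = r := resn_eq_of hn hr1 hr2 hb3
    rw [hre] at h4
    by_contra hnot
    obtain ⟨e, he1, he2, he3⟩ := Gdrop' hn hI (by omega : b + 1 ≤ a) h4 hnot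
    have h5 : (n:ℤ) ∣ e - r := by
      have hh := resn_dvd (n := n) e
      rw [he3] at hh
      exact hh
    have hde : (n:ℤ) ∣ fGN n I b - e := by
      obtain ⟨t1, ht1⟩ := hb3; obtain ⟨t2, ht2⟩ := h5
      exact ⟨t1 - t2, by linarith⟩
    have hub := (Gbnd hn hI b).2
    have := window_eq hn hde (by omega) (by omega)
    omega
  · intro hmem
    have hrIcc := hI.2.1 a hmem
    rw [Finset.mem_Icc] at hrIcc
    obtain ⟨hr1, hr2⟩ := hrIcc
    refine ⟨⟨hr1, hr2⟩, ?_⟩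
    by_contra hno
    push_neg at hno
    set v := a - 1 + resn n (r - (a - 1)) with hvdef
    have hrbv := resn_bounds hn (r - (a - 1))
    have hv1 : a ≤ v := by omega
    have hv2 : v ≤ a + n - 1 := by omega
    have hvr : (n:ℤ) ∣ v - r := by
      obtain ⟨t, ht⟩ := resn_dvd (n := n) (r - (a - 1))
      exact ⟨-t, by rw [hvdef]; linarith⟩
    have claim : ∀ j : ℕ, (j:ℤ) ≤ a - (v - n + 1) → r ∈ I (a - (j:ℤ)) := by
      intro j
      induction j with
      | zero => intro _; simpa using hmem
      | succ j ih =>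
        intro hj
        have hj' : (j:ℤ) ≤ a - (v - n + 1) := by push_cast at hj ⊢; omega
        have hprev : r ∈ I (a - (j:ℤ)) := ih hj'
        set c := a - ((j:ℤ)+1) with hcdef
        have hc1 : c + 1 = a - (j:ℤ) := by omega
        by_cases hc : r ∈ I c
        · rw [show a - ((j+1:ℕ):ℤ) = c by push_cast; omega]
          exact hc
        · exfalso
          rw [← hc1] at hprev
          obtain ⟨hdc, hlc, huc⟩ := Gback hn hI hprev hc
          have hdcv : (n:ℤ) ∣ fGN n I c - v := by
            obtain ⟨t1, ht1⟩ := hdc; obtain ⟨t2, ht2⟩ := hvr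
            exact ⟨t1 - t2, by linarith⟩
          have hcge : v - n + 1 ≤ c := by push_cast at hj; omega
          have hfcv : fGN n I c = v := by
            refine window_eq hn hdcv (by omega) (by omega)
          exact hno c (by omega) (by omega) (by rw [hfcv]; exact hvr)
    have hrmem : r ∈ I (v - n + 1) := by
      have h := claim (a - (v - n + 1)).toNat (by omega)
      rw [show a - (((a - (v - n + 1)).toNat : ℕ) : ℤ) = v - n + 1 by omega] at h
      exact h
    set c₀ := v - n with hc₀def
    have hresc₀ : resn n c₀ = r := by
      refine resn_eq_of hn hr1 hr2 ?_
      obtain ⟨t, ht⟩ := hvr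
      exact ⟨t - 1, by rw [mul_sub, mul_one]; omega⟩
    have hrmem' : r ∈ I (c₀ + 1) := by
      rw [show c₀ + 1 = v - n + 1 by omega]
      exact hrmem
    by_cases hc : r ∈ I c₀
    · -- case 2 at c₀ : fGN c₀ = c₀ + n = v
      have h1 : resn n c₀ ∈ I (resn n c₀) := by
        rw [Ires hn hI c₀, hresc₀]
        exact hc
      have h2 : resn n c₀ ∈ I (resn n c₀ + 1) := by
        rw [Ires1 hn hI c₀, hresc₀]
        exact hrmem'
      have hval := (G2 hn hI h1 h2).1
      have hfc₀ : fGN n I c₀ = v := by omega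
      refine hno c₀ (by omega) (by omega) ?_
      rw [hfc₀]; exact hvr
    · obtain ⟨hdc, hlc, huc⟩ := Gback hn hI hrmem' hc
      have hdcv : (n:ℤ) ∣ fGN n I c₀ - v := by
        obtain ⟨t1, ht1⟩ := hdc; obtain ⟨t2, ht2⟩ := hvr
        exact ⟨t1 - t2, by linarith⟩
      have := window_eq hn hdcv (by omega) (by omega)
      omega

end GN

end BAPGN

open Finset

namespace BAPGN

variable {n k : ℕ} {I : ℤ → Finset ℤ}

lemma telescope (g : ℤ → ℤ) (m : ℕ) :
    ∑ a ∈ Finset.Icc (1:ℤ) (m:ℤ), (g (a+1) - g a) = g ((m:ℤ)+1) - g 1 := by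
  induction m with
  | zero =>
    rw [show ((0:ℕ):ℤ) = 0 by norm_num, Finset.Icc_eq_empty (by norm_num)]
    simp
  | succ m ih =>
    have e : ((m+1:ℕ):ℤ) = (m:ℤ)+1 := by push_cast; ring
    rw [e]
    have hins : Finset.Icc (1:ℤ) ((m:ℤ)+1) = insert ((m:ℤ)+1) (Finset.Icc (1:ℤ) (m:ℤ)) := by
      apply Finset.ext; intro x
      rw [Finset.mem_insert, Finset.mem_Icc, Finset.mem_Icc]
      omega
    rw [hins, Finset.sum_insert (by rw [Finset.mem_Icc]; omega), ih]
    ring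

section GN

variable (hn : 0 < n) (hI : IsGN k n I)
include hn hI

lemma Gstep (a : ℤ) (ha1 : 1 ≤ a) (ha2 : a ≤ (n:ℤ)) :
    fGN n I a - a = ((∑ x ∈ I (a+1), x) - (∑ x ∈ I a, x))
      + (if (n:ℤ) + 1 ≤ fGN n I a then (n:ℤ) else 0) := by
  have hres : resn n a = a := resn_eq_self ha1 ha2
  by_cases h1 : resn n a ∈ I (resn n a)
  · by_cases h2 : resn n a ∈ I (resn n a + 1)
    · obtain ⟨hval, heq⟩ := G2 hn hI h1 h2
      rw [hval, heq, if_pos (by omega)]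
      ring
    · obtain ⟨a', ha'b, hnm, hne, heq, hval, hdvd, hb1, hb2⟩ := G3 hn hI h1 h2
      rw [hres] at heq hne
      have hmem : a ∈ I a := by have h1' := h1; rw [hres] at h1'; exact h1'
      have hnotins : a' ∉ (I a).erase a := fun hc => hnm (Finset.mem_of_mem_erase hc)
      have hsum1 : (∑ x ∈ I (a+1), x) = a' + ((∑ x ∈ I a, x) - a) := by
        rw [heq, Finset.sum_insert hnotins, Finset.sum_erase_eq_sub hmem]
      rw [hsum1]
      -- now two subcases on a' vs a
      rcases lt_or_gt_of_ne hne with hlt | hgt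
      · -- a' < a : resn (a' - a) = a' - a + n, fGN a = a' + n
        have hr : resn n (a' - resn n a) = a' - a + n := by
          refine resn_eq_of hn (by omega) (by omega) ?_
          rw [hres]
          exact ⟨-1, by ring⟩
        rw [hres] at hr
        rw [hval, hres, hr, if_pos (by omega)]
        ring
      · -- a < a' : resn (a' - a) = a' - a, fGN a = a'
        have hr : resn n (a' - resn n a) = a' - a := by
          refine resn_eq_of hn (by omega) (by omega) ?_
          rw [hres]
          exact ⟨0, by ring⟩
        rw [hres] at hr
        rw [hval, hres, hr, if_neg (by omega)]
        ring
  · obtain ⟨hval, heq⟩ := G1 hn hI h1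
    rw [hval, heq, if_neg (by omega)]
    ring

lemma Gsum : (∑ a ∈ Finset.Icc (1:ℤ) (n:ℤ), (fGN n I a - a)) = (k:ℤ) * n := by
  have hW : ((Finset.Icc ((n:ℤ)+1-(n:ℤ)) ((n:ℤ)+1-1)).filter
      (fun b => (n:ℤ)+1 ≤ fGN n I b)).card = k := by
    have h := card_neck_B hn (Ginj hn hI) (fun i => (Gbnd hn hI i).2) ((n:ℤ)+1)
    rw [Gneck hn hI] at h
    rw [h, hI.2.2.1]
  have hIcc : Finset.Icc ((n:ℤ)+1-(n:ℤ)) ((n:ℤ)+1-1) = Finset.Icc (1:ℤ) (n:ℤ) := by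
    congr 1 <;> ring
  rw [hIcc] at hW
  have hstep : ∀ a ∈ Finset.Icc (1:ℤ) (n:ℤ), fGN n I a - a
      = ((∑ x ∈ I (a+1), x) - (∑ x ∈ I a, x))
        + (if (n:ℤ) + 1 ≤ fGN n I a then (n:ℤ) else 0) := by
    intro a ha
    rw [Finset.mem_Icc] at ha
    exact Gstep hn hI a ha.1 ha.2
  rw [Finset.sum_congr rfl hstep, Finset.sum_add_distrib]
  rw [telescope (fun c => ∑ x ∈ I c, x) n]
  have hper : I ((n:ℤ)+1) = I 1 := by
    have := hI.1 1
    rw [show (1:ℤ) + (n:ℤ) = (n:ℤ) + 1 by ring] at this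
    exact this
  rw [hper]
  have hite : (∑ a ∈ Finset.Icc (1:ℤ) (n:ℤ), (if (n:ℤ)+1 ≤ fGN n I a then (n:ℤ) else 0))
      = (k:ℤ) * n := by
    rw [← Finset.sum_filter, Finset.sum_const, hW, nsmul_eq_mul]
  rw [hite]
  ring

lemma GisBAP : IsBAP k n (fGN n I) :=
  ⟨⟨Ginj hn hI, Gsurj hn hI⟩, Gshift hn hI, Gsum hn hI,
    fun i => Gbnd hn hI i⟩

end GN

end BAPGN

/-- Bounded affine permutations are in bijection with Grassmann necklaces via
`f ↦ I(f)`. -/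
theorem bap_necklace_bijection (k n : ℕ) (hn : 0 < n) :
    (∀ f : ℤ → ℤ, IsBAP k n f → IsGN k n (necklaceOf n f)) ∧
    Set.BijOn (necklaceOf n) {f | IsBAP k n f} {I | IsGN k n I} := by
  constructor
  · intro f hf
    exact BAPGN.isGN_of_bap hn hf
  · refine ⟨?_, ?_, ?_⟩
    · intro f hf
      exact BAPGN.isGN_of_bap hn hf
    · intro f hf g hg h
      exact BAPGN.neck_inj hn hf hg h
    · intro I hI
      exact ⟨BAPGN.fGN n I, BAPGN.GisBAP hn hI, BAPGN.Gneck hn hI⟩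
end

section
/- Every point of the Grassmannian has a bounded affine permutation: let X be a k×n complex matrix of rank k. Then f_X is well defined (for every i ∈ ℤ the defining minimum exists and f_X(i) ≤ i+n), the map f_X : ℤ → ℤ is a bijection satisfying f_X(i+n) = f_X(i)+n and i ≤ f_X(i) ≤ i+n for all i ∈ ℤ, and ∑_{i=1}^n (f_X(i) − i) = kn; that is, f_X is a (k,n)-bounded affine permutation. -/
/-- The columns `v_j` of a `k × n` matrix (columns labelled `1,…,n`), extended to all
`j ∈ ℤ` by the convention `v_{j+n} = (−1)^{k−1} v_j`. -/
noncomputable def extCol {k n : ℕ} [NeZero n] (X : Matrix (Fin k) (Fin n) ℂ) (j : ℤ) :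
    Fin k → ℂ :=
  fun r =>
    ((-1 : ℂ) ^ (k - 1)) ^ ((j - 1) / (n : ℤ)) *
      X r ⟨((j - 1) % (n : ℤ)).toNat, by
        have hn : (0 : ℤ) < (n : ℤ) := by exact_mod_cast Nat.pos_of_ne_zero (NeZero.ne n)
        have h1 : 0 ≤ (j - 1) % (n : ℤ) := Int.emod_nonneg _ (by omega)
        have h2 : (j - 1) % (n : ℤ) < (n : ℤ) := Int.emod_lt_of_pos _ hn
        omega⟩

/-- The bounded affine permutation of a point of the Grassmannian:
`f_X(i) = min { j ≥ i : v_i ∈ span(v_{i+1},…,v_j) }`. -/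
noncomputable def fX {k n : ℕ} [NeZero n] (X : Matrix (Fin k) (Fin n) ℂ) (i : ℤ) : ℤ :=
  sInf {j : ℤ | i ≤ j ∧ extCol X i ∈ Submodule.span ℂ (extCol X '' Set.Ioc i j)}

namespace BAPAux

open Set Submodule Matrix Pointwise

variable {k n : ℕ} [NeZero n] (X : Matrix (Fin k) (Fin n) ℂ)

lemma npos : (0 : ℤ) < (n : ℤ) := by
  exact_mod_cast Nat.pos_of_ne_zero (NeZero.ne n)

/-- The sign `(-1)^(k-1)`. -/
noncomputable def sgn (k : ℕ) : ℂ := (-1) ^ (k - 1)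

lemma sgn_ne : sgn k ≠ 0 := pow_ne_zero _ (by norm_num)

/-- The column index in `Fin n` corresponding to `j : ℤ`. -/
def idx (n : ℕ) [NeZero n] (j : ℤ) : Fin n :=
  ⟨((j - 1) % (n : ℤ)).toNat, by
    have hn : (0 : ℤ) < (n : ℤ) := npos
    have h1 : 0 ≤ (j - 1) % (n : ℤ) := Int.emod_nonneg _ (by omega)
    have h2 : (j - 1) % (n : ℤ) < (n : ℤ) := Int.emod_lt_of_pos _ hn
    omega⟩

lemma extCol_eq (j : ℤ) :
    extCol X j = (sgn k ^ ((j - 1) / (n : ℤ))) • (Xᵀ (idx n j)) := rfl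

lemma idx_shift (j : ℤ) : idx n (j + n) = idx n j := by
  apply Fin.eq_of_val_eq
  show ((j + (n : ℤ) - 1) % (n : ℤ)).toNat = ((j - 1) % (n : ℤ)).toNat
  have e : j + (n : ℤ) - 1 = (j - 1) + 1 * n := by ring
  rw [e, Int.add_mul_emod_self_right]

lemma ediv_shift (j : ℤ) : (j + (n : ℤ) - 1) / (n : ℤ) = (j - 1) / (n : ℤ) + 1 := by
  have e : j + (n : ℤ) - 1 = (j - 1) + 1 * n := by ring
  rw [e, Int.add_mul_ediv_right _ _ (npos (n := n)).ne']

lemma extCol_shift (j : ℤ) : extCol X (j + n) = sgn k • extCol X j := by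
  rw [extCol_eq X (j + n), extCol_eq X j, idx_shift, ediv_shift,
    zpow_add_one₀ (sgn_ne (k := k)), mul_comm, mul_smul]

/-- The defining set for `fX`. -/
def SS (i : ℤ) : Set ℤ :=
  {j : ℤ | i ≤ j ∧ extCol X i ∈ Submodule.span ℂ (extCol X '' Set.Ioc i j)}

lemma fX_eq (i : ℤ) : fX X i = sInf (SS X i) := rfl

lemma span_Ioc_mono (i : ℤ) {j j' : ℤ} (h : j ≤ j') :
    Submodule.span ℂ (extCol X '' Set.Ioc i j) ≤
      Submodule.span ℂ (extCol X '' Set.Ioc i j') :=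
  Submodule.span_mono (Set.image_mono (Set.Ioc_subset_Ioc_right h))

lemma span_shift (i j : ℤ) :
    Submodule.span ℂ (extCol X '' Set.Ioc (i + n) (j + n)) =
      Submodule.span ℂ (extCol X '' Set.Ioc i j) := by
  have h1 : Set.Ioc (i + (n : ℤ)) (j + n) = (fun x => x + (n : ℤ)) '' Set.Ioc i j := by
    ext x
    simp only [Set.mem_Ioc, Set.mem_image]
    constructor
    · intro h; exact ⟨x - n, ⟨by omega, by omega⟩, by omega⟩
    · rintro ⟨y, hy, rfl⟩; omega
  rw [h1, ← Set.image_comp]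
  have h2 : (extCol X ∘ fun x => x + (n : ℤ)) '' Set.Ioc i j
      = sgn k • (extCol X '' Set.Ioc i j) := by
    rw [← Set.image_smul, ← Set.image_comp]
    exact Set.image_congr' (fun x => extCol_shift X x)
  rw [h2, Submodule.span_smul_eq_of_isUnit _ _ (isUnit_iff_ne_zero.2 (sgn_ne (k := k)))]

lemma span_cols_top (hX : X.rank = k) : Submodule.span ℂ (Set.range Xᵀ) = ⊤ := by
  apply Submodule.eq_top_of_finrank_eq
  rw [show Module.finrank ℂ (Submodule.span ℂ (Set.range Xᵀ)) =
    Module.finrank ℂ (Submodule.span ℂ (Set.range X.col)) from rfl]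
  rw [← Matrix.rank_eq_finrank_span_cols, hX, Module.finrank_fintype_fun_eq_card,
    Fintype.card_fin]

lemma col_mem (i : ℤ) (t : Fin n) :
    Xᵀ t ∈ Submodule.span ℂ (extCol X '' Set.Ioc i (i + n)) := by
  have hn : (0 : ℤ) < (n : ℤ) := npos
  set j : ℤ := i + 1 + (((t : ℤ) - i) % n) with hj
  have h1 : 0 ≤ ((t : ℤ) - i) % n := Int.emod_nonneg _ hn.ne'
  have h2 : ((t : ℤ) - i) % n < n := Int.emod_lt_of_pos _ hn
  have hjm : j ∈ Set.Ioc i (i + (n : ℤ)) := by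
    simp only [Set.mem_Ioc]; omega
  have hmod : (j - 1) % (n : ℤ) = (t : ℤ) := by
    have e : j - 1 = i + ((t : ℤ) - i) % n := by rw [hj]; ring
    rw [e, Int.add_emod, Int.emod_emod_of_dvd _ dvd_rfl, ← Int.add_emod]
    have e2 : i + ((t : ℤ) - i) = (t : ℤ) := by ring
    rw [e2, Int.emod_eq_of_lt (Int.natCast_nonneg _) (by exact_mod_cast t.isLt)]
  have hidx : idx n j = t := by
    apply Fin.eq_of_val_eq
    show ((j - 1) % (n : ℤ)).toNat = (t : ℕ)
    rw [hmod]; exact Int.toNat_natCast _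
  have hmem : extCol X j ∈ Submodule.span ℂ (extCol X '' Set.Ioc i (i + n)) :=
    Submodule.subset_span ⟨j, hjm, rfl⟩
  rw [extCol_eq X j, hidx] at hmem
  exact (Submodule.smul_mem_iff _ (zpow_ne_zero _ (sgn_ne (k := k)))).mp hmem

lemma span_window (hX : X.rank = k) (i : ℤ) :
    Submodule.span ℂ (extCol X '' Set.Ioc i (i + n)) = ⊤ := by
  rw [eq_top_iff, ← span_cols_top X hX]
  rw [Submodule.span_le]
  rintro _ ⟨t, rfl⟩
  exact col_mem X i t

lemma memS_top (hX : X.rank = k) (i : ℤ) : i + (n : ℤ) ∈ SS X i := by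
  have hn : (0 : ℤ) < (n : ℤ) := npos
  exact ⟨by omega, by rw [span_window X hX]; exact Submodule.mem_top⟩

lemma isLeast_S (hX : X.rank = k) (i : ℤ) : IsLeast (SS X i) (fX X i) :=
  ⟨Int.csInf_mem ⟨_, memS_top X hX i⟩ ⟨i, fun _ hx => hx.1⟩,
   fun _ hb => csInf_le ⟨i, fun _ hx => hx.1⟩ hb⟩

lemma le_fX (hX : X.rank = k) (i : ℤ) : i ≤ fX X i := (isLeast_S X hX i).1.1

lemma fX_le (hX : X.rank = k) (i : ℤ) : fX X i ≤ i + n :=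
  (isLeast_S X hX i).2 (memS_top X hX i)

lemma fX_le_iff (hX : X.rank = k) {i m : ℤ} (him : i ≤ m) :
    fX X i ≤ m ↔ extCol X i ∈ Submodule.span ℂ (extCol X '' Set.Ioc i m) := by
  constructor
  · intro h
    exact span_Ioc_mono X i h ((isLeast_S X hX i).1.2)
  · intro h
    exact (isLeast_S X hX i).2 ⟨him, h⟩

lemma memS_shift (i m : ℤ) : m ∈ SS X i ↔ m + n ∈ SS X (i + n) := by
  unfold SS
  simp only [Set.mem_setOf_eq]
  rw [span_shift X i m, extCol_shift X i,
    Submodule.smul_mem_iff _ (sgn_ne (k := k))]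
  constructor
  · rintro ⟨h1, h2⟩; exact ⟨by omega, h2⟩
  · rintro ⟨h1, h2⟩; exact ⟨by omega, h2⟩

lemma fX_shift (hX : X.rank = k) (i : ℤ) : fX X (i + n) = fX X i + n := by
  have h := isLeast_S X hX i
  have h2 : IsLeast (SS X (i + n)) (fX X i + n) := by
    constructor
    · exact (memS_shift X i _).1 h.1
    · intro b hb
      have hb' : (b - n) + (n : ℤ) ∈ SS X (i + n) := by
        rw [show b - (n : ℤ) + n = b by ring]; exact hb
      have := h.2 ((memS_shift X i (b - n)).2 hb')
      omega
  rw [fX_eq]; exact h2.csInf_eq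

lemma fX_shift_sub (hX : X.rank = k) (i : ℤ) : fX X (i - n) = fX X i - n := by
  have := fX_shift X hX (i - n)
  rw [show i - (n : ℤ) + n = i by ring] at this
  omega

lemma fX_shift_int (hX : X.rank = k) (i : ℤ) (t : ℤ) :
    fX X (i + t * n) = fX X i + t * n := by
  induction t using Int.induction_on with
  | zero => simp
  | succ t ih =>
      rw [show i + ((t : ℤ) + 1) * n = (i + t * n) + n by ring, fX_shift X hX, ih]
      ring
  | pred t ih =>
      rw [show i + (-(t : ℤ) - 1) * n = (i + (-t) * n) - n by ring, fX_shift_sub X hX, ih]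
      ring

lemma Ioc_insert {a m : ℤ} (h : a < m) :
    Set.Ioc a m = insert m (Set.Ioc a (m - 1)) := by
  ext x
  simp only [Set.mem_Ioc, Set.mem_insert_iff]
  omega

lemma fX_ne (hX : X.rank = k) {i j : ℤ} (hij : i < j) : fX X i ≠ fX X j := by
  intro hEq
  set m := fX X j with hm
  have hjm : j ≤ m := le_fX X hX j
  have him : i < m := lt_of_lt_of_le hij hjm
  have hvi : extCol X i ∈ Submodule.span ℂ (extCol X '' Set.Ioc i m) := by
    have h0 := (isLeast_S X hX i).1.2
    rw [hEq] at h0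
    exact h0
  have hvi_not : extCol X i ∉ Submodule.span ℂ (extCol X '' Set.Ioc i (m - 1)) := by
    intro hc
    have := (fX_le_iff X hX (by omega : i ≤ m - 1)).2 hc
    omega
  rcases eq_or_lt_of_le hjm with hjm' | hjm'
  · have hv0 : extCol X j = 0 := by
      have h0 := (isLeast_S X hX j).1.2
      rw [← hm, ← hjm', Set.Ioc_self, Set.image_empty, Submodule.span_empty,
        Submodule.mem_bot] at h0
      exact h0
    rw [Ioc_insert him, Set.image_insert_eq] at hvi
    have hv0' : extCol X m = 0 := by rw [← hjm']; exact hv0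
    rw [hv0', Submodule.span_insert_zero] at hvi
    exact hvi_not hvi
  · have hvj : extCol X j ∈
        Submodule.span ℂ (insert (extCol X m) (extCol X '' Set.Ioc j (m - 1))) := by
      have h0 := (isLeast_S X hX j).1.2
      rw [← hm, Ioc_insert hjm', Set.image_insert_eq] at h0
      exact h0
    have hvj_not : extCol X j ∉ Submodule.span ℂ (extCol X '' Set.Ioc j (m - 1)) := by
      intro hc
      have := (fX_le_iff X hX (by omega : j ≤ m - 1)).2 hc
      omega
    have hexch := mem_span_insert_exchange hvj hvj_not
    have hsub : insert (extCol X j) (extCol X '' Set.Ioc j (m - 1))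
        ⊆ extCol X '' Set.Ioc i (m - 1) := by
      apply Set.insert_subset
      · exact ⟨j, by simp only [Set.mem_Ioc]; omega, rfl⟩
      · exact Set.image_mono (Set.Ioc_subset_Ioc_left hij.le)
    have hvm : extCol X m ∈ Submodule.span ℂ (extCol X '' Set.Ioc i (m - 1)) :=
      Submodule.span_mono hsub hexch
    rw [Ioc_insert him, Set.image_insert_eq, Submodule.span_insert_eq_span hvm] at hvi
    exact hvi_not hvi

lemma fX_injective (hX : X.rank = k) : Function.Injective (fX X) := by
  intro a b hab
  rcases lt_trichotomy a b with h | h | h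
  · exact absurd hab (fX_ne X hX h)
  · exact h
  · exact absurd hab.symm (fX_ne X hX h)

lemma fX_surjective (hX : X.rank = k) : Function.Surjective (fX X) := by
  have hFinj : Function.Injective
      (fun a : ZMod n => ((fX X ((a.val : ℕ) : ℤ) : ℤ) : ZMod n)) := by
    intro a b hab
    simp only at hab
    have hmeq : ((fX X ((a.val : ℕ) : ℤ)) : ℤ) ≡ fX X ((b.val : ℕ) : ℤ) [ZMOD (n : ℕ)] :=
      (ZMod.intCast_eq_intCast_iff' _ _ _).1 hab
    obtain ⟨t, ht⟩ := hmeq.dvd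
    rw [mul_comm] at ht
    have h1 : fX X (((a.val : ℕ) : ℤ) + t * n) = fX X ((b.val : ℕ) : ℤ) := by
      rw [fX_shift_int X hX]
      omega
    have h2 := fX_injective X hX h1
    have hcast : (((a.val : ℕ) : ℤ) : ZMod n) = (((b.val : ℕ) : ℤ) : ZMod n) := by
      rw [ZMod.intCast_eq_intCast_iff', ← h2, Int.add_mul_emod_self_right]
    have := hcast
    push_cast at this
    rwa [ZMod.natCast_rightInverse a, ZMod.natCast_rightInverse b] at this
  intro m
  obtain ⟨a, ha⟩ := (Finite.injective_iff_surjective.1 hFinj) ((m : ℤ) : ZMod n)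
  simp only at ha
  have hmeq : ((fX X ((a.val : ℕ) : ℤ)) : ℤ) ≡ m [ZMOD (n : ℕ)] :=
    (ZMod.intCast_eq_intCast_iff' _ _ _).1 ha
  obtain ⟨t, ht⟩ := hmeq.dvd
  rw [mul_comm] at ht
  exact ⟨((a.val : ℕ) : ℤ) + t * n, by rw [fX_shift_int X hX]; omega⟩

/-- Indicator of `m < fX X i`. -/
noncomputable def chi (i m : ℤ) : ℤ := if m < fX X i then 1 else 0

lemma chi_congr {i i' m m' : ℤ} (h1 : i = i') (h2 : m = m') :
    chi X i m = chi X i' m' := by rw [h1, h2]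

lemma chi_shift (hX : X.rank = k) (i m : ℤ) : chi X (i + n) (m + n) = chi X i m := by
  unfold chi
  rw [fX_shift X hX]
  simp only [add_lt_add_iff_right]

lemma chi_period (hX : X.rank = k) (i m : ℤ) : chi X (i - n) (m - n) = chi X i m := by
  have h := chi_shift X hX (i - n) (m - n)
  rw [show i - (n : ℤ) + n = i by ring, show m - (n : ℤ) + n = m by ring] at h
  exact h.symm

lemma sum_chi_row (hX : X.rank = k) (i : ℤ) :
    (∑ s ∈ Finset.range n, chi X i (i + s)) = fX X i - i := by
  unfold chi
  have hle := le_fX X hX i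
  have hle2 := fX_le X hX i
  rw [Finset.sum_boole]
  have hf : Finset.filter (fun s : ℕ => i + (s : ℤ) < fX X i) (Finset.range n)
      = Finset.range (fX X i - i).toNat := by
    ext a
    simp only [Finset.mem_filter, Finset.mem_range]
    omega
  rw [hf, Finset.card_range]
  omega

lemma finrank_step (hX : X.rank = k) (m : ℤ) {i : ℤ} (him : i ≤ m) :
    (Module.finrank ℂ (Submodule.span ℂ (extCol X '' Set.Ioc (i - 1) m)) : ℤ)
      = (Module.finrank ℂ (Submodule.span ℂ (extCol X '' Set.Ioc i m)) : ℤ)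
        + chi X i m := by
  have hIoc : Set.Ioc (i - 1) m = insert i (Set.Ioc i m) := by
    ext x
    simp only [Set.mem_Ioc, Set.mem_insert_iff]
    omega
  rw [hIoc, Set.image_insert_eq]
  unfold chi
  by_cases hv : extCol X i ∈ Submodule.span ℂ (extCol X '' Set.Ioc i m)
  · rw [Submodule.span_insert_eq_span hv, if_neg]
    · ring
    · have := (fX_le_iff X hX him).2 hv
      omega
  · rw [if_pos]
    swap
    · by_contra hc
      exact hv ((fX_le_iff X hX him).1 (by omega))
    have hvne : extCol X i ≠ 0 := fun h => hv (h ▸ Submodule.zero_mem _)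
    rw [Submodule.span_insert]
    have hinf : (Submodule.span ℂ {extCol X i})
        ⊓ Submodule.span ℂ (extCol X '' Set.Ioc i m) = ⊥ := by
      rw [eq_bot_iff]
      intro x hx
      rw [Submodule.mem_inf] at hx
      obtain ⟨a, rfl⟩ := Submodule.mem_span_singleton.1 hx.1
      rcases eq_or_ne a 0 with rfl | ha
      · simp
      · exact absurd ((Submodule.smul_mem_iff _ ha).mp hx.2) hv
    have hfr := Submodule.finrank_sup_add_finrank_inf_eq
      (Submodule.span ℂ {extCol X i}) (Submodule.span ℂ (extCol X '' Set.Ioc i m))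
    rw [hinf, finrank_bot, finrank_span_singleton hvne] at hfr
    omega

lemma sum_chi_col (hX : X.rank = k) (m : ℤ) :
    (∑ t ∈ Finset.range n, chi X (m - n + 1 + t) m) = k := by
  set G : ℕ → ℤ := fun t =>
    (Module.finrank ℂ (Submodule.span ℂ (extCol X '' Set.Ioc (m - (n : ℤ) + t) m)) : ℤ)
    with hG
  have hstep : ∀ t ∈ Finset.range n, chi X (m - n + 1 + t) m = G t - G (t + 1) := by
    intro t ht
    simp only [Finset.mem_range] at ht
    have him : m - (n : ℤ) + 1 + t ≤ m := by omega
    have h := finrank_step X hX m him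
    rw [show m - (n : ℤ) + 1 + (t : ℤ) - 1 = m - n + t by ring] at h
    rw [hG]
    simp only
    rw [show ((((t : ℕ) + 1 : ℕ)) : ℤ) = (t : ℤ) + 1 by push_cast; ring,
      show m - (n : ℤ) + ((t : ℤ) + 1) = m - n + 1 + t by ring]
    omega
  rw [Finset.sum_congr rfl hstep, Finset.sum_range_sub' G n]
  have h0 : G 0 = k := by
    have hw := span_window X hX (m - n)
    rw [show m - (n : ℤ) + n = m by ring] at hw
    simp only [hG]
    rw [show m - (n : ℤ) + ((0 : ℕ) : ℤ) = m - n by push_cast; ring, hw, finrank_top,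
      Module.finrank_fintype_fun_eq_card, Fintype.card_fin]
  have hend : G n = 0 := by
    simp only [hG]
    rw [show m - (n : ℤ) + ((n : ℕ) : ℤ) = m by push_cast; ring, Set.Ioc_self,
      Set.image_empty, Submodule.span_empty, finrank_bot]
    simp
  rw [h0, hend, sub_zero]

lemma sum_eq (hX : X.rank = k) :
    (∑ i ∈ Finset.Icc (1 : ℤ) (n : ℤ), (fX X i - i)) = (k : ℤ) * n := by
  have hn : (0 : ℤ) < (n : ℤ) := npos
  have h1 : ∀ i ∈ Finset.Icc (1 : ℤ) (n : ℤ),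
      fX X i - i = ∑ s ∈ Finset.range n, chi X i (i + s) :=
    fun i _ => (sum_chi_row X hX i).symm
  rw [Finset.sum_congr rfl h1, ← Finset.sum_product']
  have h2 : (∑ p ∈ Finset.Icc (1 : ℤ) (n : ℤ) ×ˢ Finset.range n, chi X p.1 (p.1 + p.2))
      = ∑ p ∈ Finset.Icc (1 : ℤ) (n : ℤ) ×ˢ Finset.range n,
          chi X (p.1 - n + 1 + p.2) p.1 := by
    apply Finset.sum_nbij'
      (i := fun p : ℤ × ℕ =>
        ((if p.1 + (p.2 : ℤ) ≤ (n : ℤ) then p.1 + p.2 else p.1 + p.2 - n, n - 1 - p.2) : ℤ × ℕ))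
      (j := fun p : ℤ × ℕ =>
        ((if 1 ≤ p.1 - ((n : ℤ) - 1 - p.2) then p.1 - ((n : ℤ) - 1 - p.2)
            else p.1 - ((n : ℤ) - 1 - p.2) + n, n - 1 - p.2) : ℤ × ℕ))
    · rintro ⟨a, s⟩ hp
      simp only [Finset.mem_product, Finset.mem_Icc, Finset.mem_range] at hp ⊢
      split_ifs <;> constructor <;> omega
    · rintro ⟨a, t⟩ hp
      simp only [Finset.mem_product, Finset.mem_Icc, Finset.mem_range] at hp ⊢
      split_ifs <;> constructor <;> omega
    · rintro ⟨a, s⟩ hp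
      simp only [Finset.mem_product, Finset.mem_Icc, Finset.mem_range] at hp
      simp only [Prod.mk.injEq]
      split_ifs <;> constructor <;> omega
    · rintro ⟨a, t⟩ hp
      simp only [Finset.mem_product, Finset.mem_Icc, Finset.mem_range] at hp
      simp only [Prod.mk.injEq]
      split_ifs <;> constructor <;> omega
    · rintro ⟨a, s⟩ hp
      simp only [Finset.mem_product, Finset.mem_Icc, Finset.mem_range] at hp
      simp only
      split_ifs with h
      · exact chi_congr X (by omega) (by omega)
      · calc chi X a (a + (s : ℤ))
            = chi X (a - n) (a + (s : ℤ) - n) := (chi_period X hX a (a + s)).symm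
          _ = _ := chi_congr X (by omega) (by omega)
  rw [h2, Finset.sum_product]
  have h3 : ∀ a ∈ Finset.Icc (1 : ℤ) (n : ℤ),
      (∑ t ∈ Finset.range n, chi X (a - n + 1 + t) a) = (k : ℤ) :=
    fun a _ => sum_chi_col X hX a
  rw [Finset.sum_congr rfl h3, Finset.sum_const, Int.card_Icc]
  rw [show ((n : ℤ) + 1 - 1).toNat = n by omega]
  push_cast
  ring

end BAPAux

/-- Every rank `k` point of `Gr(k,n)` has a well-defined bounded affine permutation:
the defining minimum exists for every `i`, and `f_X` is a `(k,n)`-bounded affine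
permutation. -/
theorem fX_isBAP {k n : ℕ} [NeZero n] (X : Matrix (Fin k) (Fin n) ℂ)
    (hX : X.rank = k) :
    (∀ i : ℤ, IsLeast
        {j : ℤ | i ≤ j ∧ extCol X i ∈ Submodule.span ℂ (extCol X '' Set.Ioc i j)}
        (fX X i)) ∧
    IsBAP k n (fX X) := by
  refine ⟨fun i => BAPAux.isLeast_S X hX i,
    ⟨BAPAux.fX_injective X hX, BAPAux.fX_surjective X hX⟩,
    fun i => BAPAux.fX_shift X hX i,
    BAPAux.sum_eq X hX,
    fun i => ⟨BAPAux.le_fX X hX i, BAPAux.fX_le X hX i⟩⟩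
end

section
/- Well-definedness of Grassmann polytope maps: let k ≤ r ≤ n and let Z be an n×r real matrix for which there exists an r×k real matrix M such that every k×k minor (maximal minor) of the n×k matrix Z·M is strictly positive. Let X be a k×n real matrix of rank k with Δ_I(X) ≥ 0 for every k-element subset I of {1,…,n}. Then the k×r matrix X·Z has rank k; in fact det(X·Z·M) > 0. Consequently the rational map Z_Gr : Gr(k,n) ⇢ Gr(k,r) induced by Z is defined at every point of Gr(k,n)_{≥0}. -/
/-- The Plücker coordinate `Δ_I(M)`: the determinant of the `k × k` submatrix of the
`k × n` matrix `M` on the columns of `I` in increasing order (and `0` if `I` does not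
have exactly `k` elements). -/
noncomputable def plk {k n : ℕ} (M : Matrix (Fin k) (Fin n) ℝ) (I : Finset (Fin n)) : ℝ :=
  if h : I.card = k then (M.submatrix id (fun r => I.orderEmbOfFin h r)).det else 0

open Matrix Finset Equiv BigOperators

variable {k n : ℕ}

lemma det_mul_expand (A : Matrix (Fin k) (Fin n) ℝ) (B : Matrix (Fin n) (Fin k) ℝ) :
    (A * B).det = ∑ f : Fin k → Fin n, (∏ i, A i (f i)) * (B.submatrix f id).det := by
  have h1 : (A * B) = Matrix.of (fun i => ∑ j, A i j • B j) := by
    ext i j; simp [Matrix.mul_apply]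
  rw [h1]
  have h2 : (Matrix.detRowAlternating (R := ℝ) (n := Fin k)).toMultilinearMap
      (fun i => ∑ j, A i j • B j) = ∑ f : Fin k → Fin n,
      (detRowAlternating (R := ℝ) (n := Fin k)).toMultilinearMap (fun i => A i (f i) • B (f i)) :=
    MultilinearMap.map_sum _ _
  have h3 : ∀ f : Fin k → Fin n,
      (detRowAlternating (R := ℝ) (n := Fin k)).toMultilinearMap (fun i => A i (f i) • B (f i))
        = (∏ i, A i (f i)) * (B.submatrix f id).det := by
    intro f
    rw [MultilinearMap.map_smul_univ]
    rfl
  calc (Matrix.of (fun i => ∑ j, A i j • B j)).det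
      = (detRowAlternating (R := ℝ) (n := Fin k)).toMultilinearMap
        (fun i => ∑ j, A i j • B j) := rfl
    _ = _ := by rw [h2]; exact Finset.sum_congr rfl fun f _ => h3 f

lemma sum_injective_eq (g : (Fin k → Fin n) → ℝ) :
    ∑ f ∈ Finset.univ.filter (fun f : Fin k → Fin n => Function.Injective f), g f
      = ∑ p : {I : Finset (Fin n) // I.card = k} × Equiv.Perm (Fin k),
          g (fun i => p.1.1.orderEmbOfFin p.1.2 (p.2 i)) := by
  rw [← Finset.sum_coe_sort (Finset.univ.filter _) g]
  refine (Fintype.sum_bijective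
    (fun p : {I : Finset (Fin n) // I.card = k} × Equiv.Perm (Fin k) =>
      (⟨fun i => p.1.1.orderEmbOfFin p.1.2 (p.2 i), by
        simp only [Finset.mem_filter, Finset.mem_univ, true_and, Finset.mem_coe]
        exact (p.1.1.orderEmbOfFin p.1.2).injective.comp p.2.injective⟩ :
        {f // f ∈ Finset.univ.filter (fun f : Fin k → Fin n => Function.Injective f)}))
    ⟨?_, ?_⟩ _ _ (fun p => rfl)).symm
  · rintro ⟨⟨I, hI⟩, σ⟩ ⟨⟨J, hJ⟩, τ⟩ h
    simp only [Subtype.mk.injEq] at h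
    have hIJ : I = J := by
      have h1 : Set.range (fun i => I.orderEmbOfFin hI (σ i)) = (I : Set (Fin n)) := by
        rw [show (fun i => I.orderEmbOfFin hI (σ i)) = (I.orderEmbOfFin hI) ∘ σ from rfl,
          Set.range_comp, Equiv.range_eq_univ, Set.image_univ, Finset.range_orderEmbOfFin]
      have h2 : Set.range (fun i => J.orderEmbOfFin hJ (τ i)) = (J : Set (Fin n)) := by
        rw [show (fun i => J.orderEmbOfFin hJ (τ i)) = (J.orderEmbOfFin hJ) ∘ τ from rfl,
          Set.range_comp, Equiv.range_eq_univ, Set.image_univ, Finset.range_orderEmbOfFin]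
      have := h1.symm.trans (by rw [h, h2])
      exact_mod_cast Finset.coe_injective this
    subst hIJ
    have hστ : σ = τ := by
      apply Equiv.ext; intro i
      exact (I.orderEmbOfFin hI).injective (congrFun h i)
    simp [hστ]
  · rintro ⟨f, hf⟩
    simp only [Finset.mem_filter, Finset.mem_univ, true_and] at hf
    set I : Finset (Fin n) := Finset.image f Finset.univ with hIdef
    have hI : I.card = k := by
      rw [hIdef, Finset.card_image_of_injective _ hf, Finset.card_univ, Fintype.card_fin]
    have hmem : ∀ i, f i ∈ I := fun i => Finset.mem_image_of_mem f (Finset.mem_univ i)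
    have hcard : Fintype.card I = k := by simp [hI]
    let e1 : Fin k ≃ I := Equiv.ofBijective (fun i => ⟨f i, hmem i⟩)
      ((Fintype.bijective_iff_injective_and_card _).2
        ⟨fun a b hab => hf (congrArg Subtype.val hab), by simp [hcard]⟩)
    let e2 : Fin k ≃ I := (I.orderIsoOfFin hI).toEquiv
    refine ⟨⟨⟨I, hI⟩, e1.trans e2.symm⟩, ?_⟩
    ext i : 2
    show I.orderEmbOfFin hI (e2.symm (e1 i)) = f i
    have : (e2 (e2.symm (e1 i)) : Fin n) = I.orderEmbOfFin hI (e2.symm (e1 i)) :=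
      Finset.coe_orderIsoOfFin_apply I hI _
    rw [← this, Equiv.apply_symm_apply]
    rfl


/-- column-side minor -/
noncomputable def plkR (B : Matrix (Fin n) (Fin k) ℝ) (I : Finset (Fin n)) : ℝ :=
  if h : I.card = k then (B.submatrix (fun r => I.orderEmbOfFin h r) id).det else 0

lemma det_col_select (A : Matrix (Fin k) (Fin n) ℝ) (e : Fin k → Fin n) :
    ∑ σ : Equiv.Perm (Fin k), Equiv.Perm.sign σ • ∏ i, A i (e (σ i))
      = (A.submatrix id e).det := by
  rw [← Matrix.det_transpose, Matrix.det_apply]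
  rfl

lemma cauchy_binet (A : Matrix (Fin k) (Fin n) ℝ) (B : Matrix (Fin n) (Fin k) ℝ) :
    (A * B).det = ∑ I : Finset (Fin n), plk A I * plkR B I := by
  have expand : (A * B).det
      = ∑ f : Fin k → Fin n, (∏ i, A i (f i)) * (B.submatrix f id).det :=
    det_mul_expand A B
  have notinj : ∀ f : Fin k → Fin n, ¬ Function.Injective f →
      (∏ i, A i (f i)) * (B.submatrix f id).det = 0 := by
    intro f hf
    obtain ⟨a, b, hab, hne⟩ : ∃ a b, f a = f b ∧ a ≠ b := by
      simp only [Function.Injective, not_forall] at hf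
      obtain ⟨a, b, h1, h2⟩ := hf; exact ⟨a, b, h1, h2⟩
    have : (B.submatrix f id).det = 0 :=
      Matrix.det_zero_of_row_eq hne (by ext j; simp [hab])
    rw [this, mul_zero]
  rw [expand, ← Finset.sum_filter_add_sum_filter_not Finset.univ
      (fun f : Fin k → Fin n => Function.Injective f)]
  rw [Finset.sum_eq_zero (s := Finset.univ.filter (fun f : Fin k → Fin n => ¬ Function.Injective f))
      (fun f hf => notinj f (by simpa using (Finset.mem_filter.1 hf).2)), add_zero]
  rw [sum_injective_eq (fun f => (∏ i, A i (f i)) * (B.submatrix f id).det)]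
  rw [Fintype.sum_prod_type]
  have inner : ∀ (I : {I : Finset (Fin n) // I.card = k}),
      ∑ σ : Equiv.Perm (Fin k),
        (∏ i, A i (I.1.orderEmbOfFin I.2 (σ i)))
          * (B.submatrix (fun i => I.1.orderEmbOfFin I.2 (σ i)) id).det
      = plk A I.1 * plkR B I.1 := by
    rintro ⟨I, hI⟩
    have hsub : ∀ σ : Equiv.Perm (Fin k),
        (B.submatrix (fun i => I.orderEmbOfFin hI (σ i)) id).det
          = Equiv.Perm.sign σ * (B.submatrix (fun i => I.orderEmbOfFin hI i) id).det := by
      intro σ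
      have : (B.submatrix (fun i => I.orderEmbOfFin hI (σ i)) id)
          = (B.submatrix (fun i => I.orderEmbOfFin hI i) id).submatrix σ id := by
        ext i j; rfl
      rw [this, Matrix.det_permute]
    simp only [hsub]
    have : ∑ σ : Equiv.Perm (Fin k),
        (∏ i, A i (I.orderEmbOfFin hI (σ i)))
          * ((Equiv.Perm.sign σ : ℝ) * (B.submatrix (fun i => I.orderEmbOfFin hI i) id).det)
        = (∑ σ : Equiv.Perm (Fin k), Equiv.Perm.sign σ • ∏ i, A i (I.orderEmbOfFin hI (σ i)))
          * (B.submatrix (fun i => I.orderEmbOfFin hI i) id).det := by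
      rw [Finset.sum_mul]
      refine Finset.sum_congr rfl fun σ _ => ?_
      simp [Units.smul_def, zsmul_eq_mul]
      ring
    rw [this, det_col_select A (fun i => I.orderEmbOfFin hI i), plk, plkR, dif_pos hI, dif_pos hI]
  rw [Finset.sum_congr rfl (fun I _ => inner I)]
  -- now sum over subtype = sum over all with zeros elsewhere
  rw [← Finset.sum_filter_add_sum_filter_not Finset.univ
      (fun I : Finset (Fin n) => I.card = k) (fun I => plk A I * plkR B I)]
  rw [Finset.sum_eq_zero (s := Finset.univ.filter (fun I : Finset (Fin n) => ¬ I.card = k))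
      (fun I hI => by
        have : ¬ I.card = k := by simpa using (Finset.mem_filter.1 hI).2
        simp [plk, plkR, dif_neg this]), add_zero]
  rw [← Finset.sum_coe_sort (Finset.univ.filter (fun I : Finset (Fin n) => I.card = k))
      (fun I => plk A I * plkR B I)]
  refine Fintype.sum_bijective (fun I : {I : Finset (Fin n) // I.card = k} =>
    (⟨I.1, by simp [I.2]⟩ : {I // I ∈ Finset.univ.filter (fun I : Finset (Fin n) => I.card = k)}))
    ⟨fun a b hab => by simpa [Subtype.ext_iff] using hab,
     fun ⟨I, hI⟩ => ⟨⟨I, by simpa using hI⟩, rfl⟩⟩ _ _ (fun I => rfl)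

lemma det_ne_zero_of_rank_eq {m : ℕ} (A : Matrix (Fin m) (Fin m) ℝ) (h : A.rank = m) :
    A.det ≠ 0 := by
  have hrange : LinearMap.range A.mulVecLin = ⊤ := by
    apply Submodule.eq_top_of_finrank_eq
    rw [Matrix.rank] at h
    rw [h, Module.finrank_fintype_fun_eq_card, Fintype.card_fin]
  have hsurj : Function.Surjective A.mulVec := by
    intro v
    obtain ⟨w, hw⟩ := LinearMap.range_eq_top.mp hrange v
    exact ⟨w, hw⟩
  have := Matrix.mulVec_surjective_iff_isUnit.mp hsurj
  exact (((Matrix.isUnit_iff_isUnit_det A).mp this)).ne_zero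

lemma plkR_transpose (X : Matrix (Fin k) (Fin n) ℝ) (I : Finset (Fin n)) :
    plkR Xᵀ I = plk X I := by
  by_cases h : I.card = k
  · rw [plk, plkR, dif_pos h, dif_pos h,
      show Xᵀ.submatrix (fun r => I.orderEmbOfFin h r) id
        = (X.submatrix id (fun r => I.orderEmbOfFin h r))ᵀ from rfl, Matrix.det_transpose]
  · rw [plk, plkR, dif_neg h, dif_neg h]

/-- Well-definedness of Grassmann polytope maps: if there is an `r × k` matrix `M` with
all maximal minors of `Z·M` strictly positive, then for every totally nonnegative `X`
of rank `k` the matrix `X·Z` has rank `k`; in fact `det(X·Z·M) > 0`. -/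
theorem grassmann_polytope_map_welldefined {k r n : ℕ} (hkr : k ≤ r) (hrn : r ≤ n)
    (Z : Matrix (Fin n) (Fin r) ℝ) (M : Matrix (Fin r) (Fin k) ℝ)
    (hZM : ∀ (I : Finset (Fin n)) (h : I.card = k),
      0 < ((Z * M).submatrix (fun s => I.orderEmbOfFin h s) id).det)
    (X : Matrix (Fin k) (Fin n) ℝ) (hrank : X.rank = k)
    (hX : ∀ I : Finset (Fin n), I.card = k → 0 ≤ plk X I) :
    0 < (X * Z * M).det ∧ (X * Z).rank = k := by
  -- some Plücker coordinate of X is positive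
  have hXXt : (X * Xᵀ).det = ∑ I : Finset (Fin n), plk X I * plk X I := by
    rw [cauchy_binet X Xᵀ]
    exact Finset.sum_congr rfl fun I _ => by rw [plkR_transpose]
  have hrkXXt : (X * Xᵀ).rank = k := by rw [Matrix.rank_self_mul_transpose, hrank]
  have hdetXXt : (X * Xᵀ).det ≠ 0 := det_ne_zero_of_rank_eq _ hrkXXt
  have hex : ∃ I₀ : Finset (Fin n), I₀.card = k ∧ 0 < plk X I₀ := by
    by_contra hcon
    push_neg at hcon
    apply hdetXXt
    rw [hXXt]
    apply Finset.sum_eq_zero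
    intro I _
    by_cases h : I.card = k
    · have h1 := hX I h
      have h2 := hcon I h
      have : plk X I = 0 := le_antisymm h2 h1
      rw [this, mul_zero]
    · rw [show plk X I = 0 from dif_neg h, mul_zero]
  obtain ⟨I₀, hI₀, hpos⟩ := hex
  -- positivity of det (X * Z * M) via Cauchy-Binet
  have key : (X * Z * M).det = ∑ I : Finset (Fin n), plk X I * plkR (Z * M) I := by
    rw [Matrix.mul_assoc, cauchy_binet X (Z * M)]
  have hdetpos : 0 < (X * Z * M).det := by
    rw [key]
    have nonneg : ∀ I ∈ (Finset.univ : Finset (Finset (Fin n))),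
        0 ≤ plk X I * plkR (Z * M) I := by
      intro I _
      by_cases h : I.card = k
      · refine mul_nonneg (hX I h) (le_of_lt ?_)
        unfold plkR
        rw [dif_pos h]
        exact hZM I h
      · rw [show plk X I = 0 from dif_neg h, zero_mul]
    refine Finset.sum_pos' nonneg ⟨I₀, Finset.mem_univ _, mul_pos hpos ?_⟩
    unfold plkR
    rw [dif_pos hI₀]
    exact hZM I₀ hI₀
  refine ⟨hdetpos, le_antisymm ?_ ?_⟩
  · simpa using Matrix.rank_le_height (X * Z)
  · have h1 : (X * Z * M).rank = k := by
      have : IsUnit (X * Z * M).det := isUnit_iff_ne_zero.mpr (ne_of_gt hdetpos)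
      rw [Matrix.rank_of_isUnit _ ((Matrix.isUnit_iff_isUnit_det _).mpr this), Fintype.card_fin]
    calc k = (X * Z * M).rank := h1.symm
      _ ≤ (X * Z).rank := Matrix.rank_mul_le_left _ _
end

section
/- Positive matrices satisfy the Grassmann polytope positivity condition: let k ≤ r ≤ n and let Z be an n×r real matrix all of whose r×r minors (maximal minors) are strictly positive. Then there exists an r×k real matrix M such that every k×k minor (maximal minor) of the n×k matrix Z·M is strictly positive. -/
open Finset Matrix

namespace GrassAux

variable {n r : ℕ}

/-- number of values of `g` strictly below `i` -/
def cnt (g : Fin r → Fin n) (i : Fin n) : ℕ := #(univ.filter fun s => g s < i)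

lemma cnt_le (g : Fin r → Fin n) (i : Fin n) : cnt g i ≤ r := by
  classical
  calc cnt g i ≤ #(univ : Finset (Fin r)) := Finset.card_filter_le _ _
  _ = r := by simp

lemma lt_cnt_iff {g : Fin r → Fin n} (hg : StrictMono g) {i : Fin n} (hi : ∀ s, g s ≠ i)
    (s : Fin r) : (s : ℕ) < cnt g i ↔ g s < i := by
  classical
  constructor
  · intro h
    by_contra hc
    have hgs : i < g s := lt_of_le_of_ne (not_lt.1 hc) (Ne.symm (hi s))
    have hsub : (univ.filter fun s' => g s' < i) ⊆ Finset.Iio s := by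
      intro s' hs'
      simp only [Finset.mem_filter, Finset.mem_univ, true_and] at hs'
      rw [Finset.mem_Iio]
      by_contra hss
      exact absurd (lt_trans hs' hgs) (not_lt.2 (hg.monotone (not_lt.1 hss)))
    have h2 := Finset.card_le_card hsub
    rw [Fin.card_Iio] at h2
    simp only [cnt] at h
    omega
  · intro h
    have hsub : Finset.Iic s ⊆ (univ.filter fun s' => g s' < i) := by
      intro s' hs'
      rw [Finset.mem_Iic] at hs'
      simp only [Finset.mem_filter, Finset.mem_univ, true_and]
      exact lt_of_le_of_lt (hg.monotone hs') h
    have h2 := Finset.card_le_card hsub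
    rw [Fin.card_Iic] at h2
    simp only [cnt]
    omega

lemma i_lt_of_cnt_le {g : Fin r → Fin n} (hg : StrictMono g) {i : Fin n} (hi : ∀ s, g s ≠ i)
    {s : Fin r} (h : cnt g i ≤ (s : ℕ)) : i < g s :=
  lt_of_le_of_ne (not_lt.1 fun hc => by have := (lt_cnt_iff hg hi s).2 hc; omega)
    (Ne.symm (hi s))

/-- merge `i` into the sorted list `g`. -/
def merge (g : Fin r → Fin n) (i : Fin n) : Fin (r + 1) → Fin n := fun t =>
  if h : (t : ℕ) < cnt g i then g ⟨t, lt_of_lt_of_le h (cnt_le g i)⟩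
  else if h' : (t : ℕ) = cnt g i then i
  else g ⟨(t : ℕ) - 1, by have := t.isLt; have := cnt_le g i; omega⟩

lemma merge_strictMono {g : Fin r → Fin n} (hg : StrictMono g) {i : Fin n}
    (hi : ∀ s, g s ≠ i) : StrictMono (merge g i) := by
  intro t t' htt
  have htt' : (t : ℕ) < (t' : ℕ) := htt
  have ht := t.isLt
  have ht' := t'.isLt
  have hcl := cnt_le g i
  unfold merge
  rcases lt_trichotomy (t : ℕ) (cnt g i) with h1 | h1 | h1 <;>
    rcases lt_trichotomy (t' : ℕ) (cnt g i) with h2 | h2 | h2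
  · rw [dif_pos h1, dif_pos h2]; exact hg (by rw [Fin.mk_lt_mk]; exact htt')
  · rw [dif_pos h1, dif_neg (by omega), dif_pos h2]
    exact (lt_cnt_iff hg hi _).1 h1
  · rw [dif_pos h1, dif_neg (by omega), dif_neg (by omega)]
    exact lt_trans ((lt_cnt_iff hg hi _).1 h1)
      (i_lt_of_cnt_le hg hi (s := ⟨(t' : ℕ) - 1, by omega⟩) (by simp; omega))
  · omega
  · omega
  · rw [dif_neg (by omega), dif_pos h1, dif_neg (by omega), dif_neg (by omega)]
    exact i_lt_of_cnt_le hg hi (by simp; omega)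
  · omega
  · omega
  · rw [dif_neg (by omega), dif_neg (by omega), dif_neg (by omega), dif_neg (by omega)]
    exact hg (by rw [Fin.mk_lt_mk]; omega)

lemma merge_comp {g : Fin r → Fin n} (hg : StrictMono g) {i : Fin n}
    (hi : ∀ s, g s ≠ i) (u : Fin (r + 1)) :
    (Fin.cons i g : Fin (r + 1) → Fin n) u =
      merge g i ((⟨cnt g i, by have := cnt_le g i; omega⟩ : Fin (r + 1)).cycleRange⁻¹ u) := by
  classical
  set P : Fin (r + 1) := ⟨cnt g i, by have := cnt_le g i; omega⟩ with hP
  cases u using Fin.cases with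
  | zero =>
    have h0 : P.cycleRange⁻¹ 0 = P := by
      rw [← Fin.cycleRange_self P]; exact Equiv.symm_apply_apply _ _
    rw [h0, Fin.cons_zero]
    unfold merge
    rw [dif_neg (by simp [hP]), dif_pos (by simp [hP])]
  | succ s =>
    rcases lt_or_ge (s : ℕ) (cnt g i) with h | h
    · have hcast : P.cycleRange⁻¹ s.succ = s.castSucc := by
        have hc : P.cycleRange s.castSucc = s.succ := by
          rw [Fin.cycleRange_of_lt (by rw [Fin.lt_def]; simpa [hP] using h),
            Fin.coeSucc_eq_succ]
        rw [← hc]; exact Equiv.symm_apply_apply _ _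
      rw [hcast, Fin.cons_succ]
      unfold merge
      rw [dif_pos (by simpa using h)]
      exact congrArg g (Fin.ext (by simp))
    · have hfix : P.cycleRange⁻¹ s.succ = s.succ := by
        have hc : P.cycleRange s.succ = s.succ := by
          refine Fin.cycleRange_of_gt ?_
          rw [Fin.lt_def]
          simp only [hP, Fin.val_succ]
          omega
        conv_lhs => rw [← hc]
        exact Equiv.symm_apply_apply _ _
      rw [hfix, Fin.cons_succ]
      unfold merge
      rw [dif_neg (by simp only [Fin.val_succ]; omega),
        dif_neg (by simp only [Fin.val_succ]; omega)]
      exact congrArg g (Fin.ext (by simp))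

end GrassAux

namespace GrassAux

variable {n r : ℕ}

lemma det_cons_eq {g : Fin r → Fin n} (hg : StrictMono g) {i : Fin n} (hi : ∀ s, g s ≠ i)
    (Z : Matrix (Fin n) (Fin (r + 1)) ℝ) :
    (Z.submatrix (Fin.cons i g : Fin (r + 1) → Fin n) id).det
      = (-1 : ℝ) ^ (cnt g i) * (Z.submatrix (merge g i) id).det := by
  have hmat : Z.submatrix (Fin.cons i g : Fin (r + 1) → Fin n) id
      = (Z.submatrix (merge g i) id).submatrix
          (⇑(⟨cnt g i, by have := cnt_le g i; omega⟩ : Fin (r + 1)).cycleRange⁻¹) id := by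
    ext u j
    simp [Matrix.submatrix_apply, merge_comp hg hi u]
  rw [hmat, Matrix.det_permute]
  congr 1
  rw [Equiv.Perm.sign_inv, Fin.sign_cycleRange]
  push_cast
  simp

lemma cons_row_eq (Z : Matrix (Fin n) (Fin (r + 1)) ℝ) (g : Fin r → Fin n) (i : Fin n) :
    Z.submatrix (Fin.cons i g : Fin (r + 1) → Fin n) id
      = Matrix.of (Fin.cons (Z i) (fun s => Z (g s))
          : Fin (r + 1) → Fin (r + 1) → ℝ) := by
  ext u j
  cases u using Fin.cases <;> simp

lemma det_rows_sum (Z : Matrix (Fin n) (Fin (r + 1)) ℝ) (g : Fin r → Fin n) (c : Fin n → ℝ) :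
    (Matrix.of (Fin.cons (∑ i, c i • Z i) (fun s => Z (g s))
        : Fin (r + 1) → Fin (r + 1) → ℝ)).det
      = ∑ i, c i * (Z.submatrix (Fin.cons i g : Fin (r + 1) → Fin n) id).det := by
  classical
  have hupd : ∀ v : Fin (r + 1) → ℝ,
      (Matrix.of (Fin.cons v (fun s => Z (g s)) : Fin (r + 1) → Fin (r + 1) → ℝ))
        = Function.update
            (Matrix.of (Fin.cons 0 (fun s => Z (g s)) : Fin (r + 1) → Fin (r + 1) → ℝ))
            0 v := by
    intro v
    funext u
    cases u using Fin.cases with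
    | zero => exact (Function.update_self (β := fun _ => Fin (r + 1) → ℝ) (0 : Fin (r + 1)) v _).symm
    | succ s => exact (Function.update_of_ne (Fin.succ_ne_zero s) v _).symm
  have hdet : ∀ M : Matrix (Fin (r + 1)) (Fin (r + 1)) ℝ,
      M.det = Matrix.detRowAlternating M := fun _ => rfl
  rw [hupd]
  refine (hdet _).trans ?_
  refine ((Matrix.detRowAlternating (n := Fin (r + 1)) (R := ℝ)).map_update_sum
    Finset.univ 0 (fun i => c i • Z i) _).trans ?_
  refine Finset.sum_congr rfl fun i _ => ?_
  refine (AlternatingMap.map_update_smul _ _ _ _ _).trans ?_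
  rw [cons_row_eq Z g i, hupd (Z i)]
  rfl

lemma det_cons_zero_of_mem (Z : Matrix (Fin n) (Fin (r + 1)) ℝ) (g : Fin r → Fin n)
    {i : Fin n} {s : Fin r} (hs : g s = i) :
    (Z.submatrix (Fin.cons i g : Fin (r + 1) → Fin n) id).det = 0 := by
  refine Matrix.det_zero_of_row_eq (i := (0 : Fin (r + 1))) (j := s.succ)
    (Fin.succ_ne_zero s).symm ?_
  funext j
  simp [hs]

end GrassAux

namespace GrassAux

open Filter Topology

variable {n r : ℕ}

/-- complement of the range of `g` -/
def compl (g : Fin r → Fin n) : Finset (Fin n) := univ.filter fun i => ∀ s, g s ≠ i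

lemma exists_eq_of_not_mem_compl {g : Fin r → Fin n} {i : Fin n} (h : i ∉ compl g) :
    ∃ s, g s = i := by
  simp only [compl, Finset.mem_filter, Finset.mem_univ, true_and, not_forall, not_not] at h
  obtain ⟨s, hs⟩ := h
  exact ⟨s, by simpa using hs⟩

lemma ne_of_mem_compl {g : Fin r → Fin n} {i : Fin n} (h : i ∈ compl g) : ∀ s, g s ≠ i := by
  simpa [compl] using h

lemma compl_nonempty (hrn : r < n) (g : Fin r → Fin n) : (compl g).Nonempty := by
  by_contra h
  rw [Finset.not_nonempty_iff_eq_empty] at h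
  have hsurj : Function.Surjective g := fun i =>
    exists_eq_of_not_mem_compl (by simp [h])
  have := Fintype.card_le_of_surjective g hsurj
  simp only [Fintype.card_fin] at this
  omega

lemma cnt_min' {g : Fin r → Fin n} (hg : StrictMono g) (hne : (compl g).Nonempty) :
    cnt g ((compl g).min' hne) = (((compl g).min' hne : Fin n) : ℕ) := by
  classical
  set i0 := (compl g).min' hne with hi0
  have h : #(univ.filter fun s => g s < i0) = (Finset.Iio i0).card := by
    refine Finset.card_bij (fun s _ => g s) ?_ ?_ ?_
    · intro s hs
      simp only [Finset.mem_filter, Finset.mem_univ, true_and] at hs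
      simpa using hs
    · intro s hs s' hs' h
      exact hg.injective h
    · intro j hj
      rw [Finset.mem_Iio] at hj
      have hjn : j ∉ compl g := fun hm => absurd (Finset.min'_le _ _ hm) (not_le.2 hj)
      obtain ⟨s, hs⟩ := exists_eq_of_not_mem_compl hjn
      exact ⟨s, by simp [Finset.mem_filter, hs, hj], hs⟩
  rw [cnt, h, Fin.card_Iio]

/-- the square matrix with first row `a` and remaining rows the rows of `Z` indexed by `g` -/
def W (Z : Matrix (Fin n) (Fin (r + 1)) ℝ) (a : Fin (r + 1) → ℝ) (g : Fin r → Fin n) :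
    Matrix (Fin (r + 1)) (Fin (r + 1)) ℝ := Matrix.of (Fin.cons a (fun s => Z (g s)))

/-- the auxiliary row vector -/
def aRow (Z : Matrix (Fin n) (Fin (r + 1)) ℝ) (ε : ℝ) : Fin (r + 1) → ℝ :=
  ∑ i : Fin n, (-ε) ^ (i : ℕ) • Z i

lemma detW_eq (Z : Matrix (Fin n) (Fin (r + 1)) ℝ) {g : Fin r → Fin n} (hg : StrictMono g)
    (ε : ℝ) :
    (W Z (aRow Z ε) g).det
      = ∑ i ∈ compl g, (-ε) ^ (i : ℕ) *
          ((-1 : ℝ) ^ (cnt g i) * (Z.submatrix (merge g i) id).det) := by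
  classical
  rw [W, aRow, det_rows_sum Z g (fun i => (-ε) ^ (i : ℕ))]
  rw [← Finset.sum_subset (Finset.subset_univ (compl g))]
  · refine Finset.sum_congr rfl fun i hi => ?_
    rw [det_cons_eq hg (ne_of_mem_compl hi) Z]
  · intro i _ hi
    obtain ⟨s, hs⟩ := exists_eq_of_not_mem_compl hi
    rw [det_cons_zero_of_mem Z g hs, mul_zero]

lemma eventually_pos {Z : Matrix (Fin n) (Fin (r + 1)) ℝ} (hrn : r < n)
    (hZ : ∀ f : Fin (r + 1) → Fin n, StrictMono f → 0 < (Z.submatrix f id).det)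
    {g : Fin r → Fin n} (hg : StrictMono g) :
    ∀ᶠ ε in 𝓝[>] (0 : ℝ), 0 < (W Z (aRow Z ε) g).det := by
  classical
  have hne := compl_nonempty hrn g
  set i0 := (compl g).min' hne with hi0
  set m : ℕ := (i0 : ℕ) with hm
  set D : Fin n → ℝ := fun i => (Z.submatrix (merge g i) id).det with hD
  set G : ℝ → ℝ := fun ε =>
    ∑ i ∈ compl g, ε ^ ((i : ℕ) - m) * ((-1 : ℝ) ^ ((i : ℕ) + cnt g i) * D i) with hG
  have hW : ∀ ε : ℝ, (W Z (aRow Z ε) g).det = ε ^ m * G ε := by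
    intro ε
    rw [detW_eq Z hg ε, hG, Finset.mul_sum]
    refine Finset.sum_congr rfl fun i hi => ?_
    have him : m ≤ (i : ℕ) := Finset.min'_le _ _ hi
    have hpow : ε ^ (i : ℕ) = ε ^ m * ε ^ ((i : ℕ) - m) := by
      rw [← pow_add]
      congr 1
      omega
    rw [neg_pow, pow_add]
    rw [hpow]
    ring
  have hG0 : G 0 = D i0 := by
    have hcm : cnt g i0 = m := by rw [hi0]; exact cnt_min' hg hne
    simp only [hG]
    rw [Finset.sum_eq_single i0]
    · rw [hcm, ← hm, Nat.sub_self, pow_zero, one_mul, ← two_mul, pow_mul]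
      norm_num
    · intro i hi hine
      have him : m ≤ (i : ℕ) := Finset.min'_le _ _ hi
      have : (i : ℕ) ≠ m := fun h => hine (Fin.ext h)
      rw [zero_pow (by omega), zero_mul]
    · intro h
      exact absurd (Finset.min'_mem _ hne) h
  have hD0 : 0 < D i0 :=
    hZ _ (merge_strictMono hg (ne_of_mem_compl (Finset.min'_mem _ hne)))
  have hGc : Continuous G := by
    rw [hG]
    exact continuous_finset_sum _ fun i _ => (continuous_pow _).mul continuous_const
  have h1 : ∀ᶠ ε in 𝓝 (0 : ℝ), 0 < G ε :=
    hGc.continuousAt.eventually (eventually_gt_nhds (hG0 ▸ hD0))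
  filter_upwards [nhdsWithin_le_nhds h1, self_mem_nhdsWithin] with ε h hε
  rw [hW ε]
  exact mul_pos (pow_pos hε m) h

lemma exists_good_a (hrn : r + 1 ≤ n) (Z : Matrix (Fin n) (Fin (r + 1)) ℝ)
    (hZ : ∀ f : Fin (r + 1) → Fin n, StrictMono f → 0 < (Z.submatrix f id).det) :
    ∃ a : Fin (r + 1) → ℝ, ∀ g : Fin r → Fin n, StrictMono g → 0 < (W Z a g).det := by
  classical
  have key : ∀ I : {I : Finset (Fin n) // I.card = r}, ∀ᶠ ε in 𝓝[>] (0 : ℝ),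
      0 < (W Z (aRow Z ε) (fun s => I.1.orderEmbOfFin I.2 s)).det := fun I =>
    eventually_pos (by omega) hZ (I.1.orderEmbOfFin I.2).strictMono
  obtain ⟨ε, hε⟩ := (Filter.eventually_all.2 key).exists
  refine ⟨aRow Z ε, fun g hg => ?_⟩
  have hcard : (univ.image g).card = r := by
    rw [Finset.card_image_of_injective _ hg.injective, Finset.card_univ, Fintype.card_fin]
  have hgeq : g = fun s => (univ.image g).orderEmbOfFin hcard s :=
    Finset.orderEmbOfFin_unique hcard
      (fun x => Finset.mem_image_of_mem g (Finset.mem_univ x)) hg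
  rw [hgeq]
  exact hε ⟨univ.image g, hcard⟩

end GrassAux

namespace GrassAux

variable {n r : ℕ}

lemma step (hrn : r + 1 ≤ n) (Z : Matrix (Fin n) (Fin (r + 1)) ℝ)
    (hZ : ∀ f : Fin (r + 1) → Fin n, StrictMono f → 0 < (Z.submatrix f id).det) :
    ∃ M : Matrix (Fin (r + 1)) (Fin r) ℝ,
      ∀ g : Fin r → Fin n, StrictMono g → 0 < ((Z * M).submatrix g id).det := by
  classical
  obtain ⟨a, ha⟩ := exists_good_a hrn Z hZ
  set g0 : Fin r → Fin n := Fin.castLE (by omega) with hg0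
  have hg0m : StrictMono g0 := Fin.strictMono_castLE _
  set B := W Z a g0 with hB
  have hBpos : 0 < B.det := ha g0 hg0m
  have hBu : IsUnit B.det := isUnit_iff_ne_zero.2 hBpos.ne'
  refine ⟨B⁻¹.submatrix id Fin.succ, fun g hg => ?_⟩
  set M := B⁻¹.submatrix id Fin.succ with hM
  set Q := W Z a g * B⁻¹ with hQ
  have hQ0 : ∀ j, Q 0 j = (1 : Matrix (Fin (r + 1)) (Fin (r + 1)) ℝ) 0 j := by
    intro j
    have h1 : Q 0 j = (B * B⁻¹) 0 j := by
      rw [hQ, Matrix.mul_apply, Matrix.mul_apply]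
      refine Finset.sum_congr rfl fun l _ => ?_
      congr 1
    rw [h1, Matrix.mul_nonsing_inv _ hBu]
  have hQs : Q.submatrix Fin.succ Fin.succ = (Z * M).submatrix g id := by
    ext s t
    rw [Matrix.submatrix_apply, Matrix.submatrix_apply, hQ, Matrix.mul_apply,
      Matrix.mul_apply]
    refine Finset.sum_congr rfl fun l _ => ?_
    rw [hM, Matrix.submatrix_apply]
    congr 1
  have hdetQ : Q.det = (W Z a g).det * B.det⁻¹ := by
    rw [hQ, Matrix.det_mul, Matrix.det_nonsing_inv, Ring.inverse_eq_inv]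
  have hexp : Q.det = ((Z * M).submatrix g id).det := by
    rw [Matrix.det_succ_row_zero]
    rw [Finset.sum_eq_single 0]
    · rw [hQ0 0]
      simp [hQs]
    · intro j _ hj
      rw [hQ0 j]
      simp [Matrix.one_apply, Ne.symm hj]
    · simp
  rw [← hexp, hdetQ]
  exact mul_pos (ha g hg) (inv_pos.2 hBpos)

lemma main (k r n : ℕ) (hkr : k ≤ r) :
    ∀ (_ : r ≤ n) (Z : Matrix (Fin n) (Fin r) ℝ),
    (∀ f : Fin r → Fin n, StrictMono f → 0 < (Z.submatrix f id).det) →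
    ∃ M : Matrix (Fin r) (Fin k) ℝ,
      ∀ g : Fin k → Fin n, StrictMono g → 0 < ((Z * M).submatrix g id).det := by
  induction r, hkr using Nat.le_induction with
  | base =>
    intro hrn Z hZ
    exact ⟨1, fun g hg => by rw [Matrix.mul_one]; exact hZ g hg⟩
  | succ r hkr ih =>
    intro hrn Z hZ
    obtain ⟨M1, hM1⟩ := step hrn Z hZ
    obtain ⟨M2, hM2⟩ := ih (by omega) (Z * M1) hM1
    exact ⟨M1 * M2, fun g hg => by rw [← Matrix.mul_assoc]; exact hM2 g hg⟩

end GrassAux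

/-- Positive matrices satisfy the Grassmann polytope positivity condition: if all
`r × r` maximal minors of the `n × r` matrix `Z` are strictly positive, then there is an
`r × k` matrix `M` such that all `k × k` maximal minors of `Z·M` are strictly
positive. -/
theorem positive_Z_satisfies_condition {k r n : ℕ} (hkr : k ≤ r) (hrn : r ≤ n)
    (Z : Matrix (Fin n) (Fin r) ℝ)
    (hZ : ∀ (L : Finset (Fin n)) (h : L.card = r),
      0 < (Z.submatrix (fun s => L.orderEmbOfFin h s) id).det) :
    ∃ M : Matrix (Fin r) (Fin k) ℝ,
      ∀ (I : Finset (Fin n)) (h : I.card = k),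
        0 < ((Z * M).submatrix (fun s => I.orderEmbOfFin h s) id).det := by
  classical
  have h1 : ∀ f : Fin r → Fin n, StrictMono f → 0 < (Z.submatrix f id).det := by
    intro f hf
    have hcard : (Finset.univ.image f).card = r := by
      rw [Finset.card_image_of_injective _ hf.injective, Finset.card_univ, Fintype.card_fin]
    have h2 := hZ (Finset.univ.image f) hcard
    rwa [← Finset.orderEmbOfFin_unique hcard
      (fun x => Finset.mem_image_of_mem f (Finset.mem_univ x)) hf] at h2
  obtain ⟨M, hM⟩ := GrassAux.main k r n hkr hrn Z h1
  exact ⟨M, fun I h => hM (fun s => I.orderEmbOfFin h s) (I.orderEmbOfFin h).strictMono⟩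
end

section
/- Fixed sign of facet functionals of the amplituhedron: let k ≤ r ≤ n, m := r − k, and let Z be an n×r real matrix all of whose r×r minors are strictly positive. Let I ⊆ {1,…,n} with |I| = m satisfy the evenness condition: for every pair i, i′ ∈ {1,…,n} ∖ I, the number of elements of I strictly between i and i′ is even. For a k×n real matrix X, let D(X) denote the determinant of the r×r matrix whose first k rows are the rows of X·Z and whose last m rows are the rows of Z indexed by the elements of I in increasing order. Then there exists a sign ε ∈ {+1,−1} such that ε·D(X) ≥ 0 for every k×n real matrix X with Δ_J(X) ≥ 0 for all k-element subsets J of {1,…,n}. -/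
open Finset Function Matrix Equiv

namespace Ampl

open Finset Function Matrix Equiv


variable {n r N : ℕ}

lemma det_mul_sum_fn (A : Matrix (Fin r) (Fin n) ℝ) (B : Matrix (Fin n) (Fin r) ℝ) :
    (A * B).det = ∑ f : Fin r → Fin n, (A.submatrix id f).det * ∏ i, B (f i) i := by
  have : (A * B).det
      = ∑ f : Fin r → Fin n, ∑ σ : Equiv.Perm (Fin r),
          (Equiv.Perm.sign σ : ℝ) * ∏ i, A (σ i) (f i) * B (f i) i := by
    simp only [Matrix.det_apply', Matrix.mul_apply, Finset.prod_univ_sum, Finset.mul_sum,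
      Fintype.piFinset_univ]
    rw [Finset.sum_comm]
  rw [this]
  refine Finset.sum_congr rfl fun f _ => ?_
  rw [Matrix.det_apply', Finset.sum_mul]
  refine Finset.sum_congr rfl fun σ _ => ?_
  simp [Finset.prod_mul_distrib, Matrix.submatrix_apply, mul_assoc]

lemma hcard (f : Fin r → Fin n) (hf : Injective f) : (Finset.univ.image f).card = r := by
  rw [Finset.card_image_of_injective _ hf, Finset.card_univ, Fintype.card_fin]

noncomputable def permOf (f : Fin r → Fin n) : Equiv.Perm (Fin r) := by
  classical
  exact if hf : Injective f then
    Equiv.ofBijective (fun p => ((Finset.univ.image f).orderIsoOfFin (hcard f hf)).symm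
      ⟨f p, Finset.mem_image_of_mem f (Finset.mem_univ p)⟩)
      (by
        rw [← Finite.injective_iff_bijective]
        intro p q hpq
        apply hf
        have := congrArg (fun z => ((((Finset.univ.image f).orderIsoOfFin (hcard f hf))) z).1) hpq
        simpa using this)
  else 1

lemma permOf_spec {f : Fin r → Fin n} (hf : Injective f) (p : Fin r) :
    (Finset.univ.image f).orderEmbOfFin (hcard f hf) (permOf f p) = f p := by
  rw [permOf, dif_pos hf]
  rw [← Finset.coe_orderIsoOfFin_apply]
  simp

lemma orderEmbOfFin_congr {s t : Finset (Fin n)} (hst : s = t) (hs : s.card = r) (p : Fin r) :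
    s.orderEmbOfFin hs p = t.orderEmbOfFin (hst ▸ hs) p := by subst hst; rfl

lemma image_orderEmbOfFin_comp {L : Finset (Fin n)} (hL : L.card = r) (σ : Equiv.Perm (Fin r)) :
    Finset.univ.image ((L.orderEmbOfFin hL) ∘ σ) = L := by
  ext y
  simp only [Finset.mem_image, Function.comp_apply, Finset.mem_univ, true_and]
  constructor
  · rintro ⟨p, rfl⟩; exact Finset.orderEmbOfFin_mem L hL (σ p)
  · intro hy
    have : y ∈ Set.range (L.orderEmbOfFin hL) := by
      rw [Finset.range_orderEmbOfFin]; exact hy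
    obtain ⟨q, hq⟩ := this
    exact ⟨σ.symm q, by simp [hq]⟩

lemma cauchyBinet (A : Matrix (Fin r) (Fin n) ℝ) (B : Matrix (Fin n) (Fin r) ℝ) :
    (A * B).det = ∑ L : {s : Finset (Fin n) // s.card = r},
      (A.submatrix id (L.1.orderEmbOfFin L.2)).det *
      (B.submatrix (L.1.orderEmbOfFin L.2) id).det := by
  classical
  rw [det_mul_sum_fn]
  rw [← Finset.sum_filter_add_sum_filter_not Finset.univ Injective]
  have h2 : ∑ f ∈ Finset.univ.filter (fun f : Fin r → Fin n => ¬ Injective f),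
      (A.submatrix id f).det * ∏ i, B (f i) i = 0 := by
    refine Finset.sum_eq_zero fun f hf => ?_
    rw [Finset.mem_filter] at hf; simp only [Injective] at hf
    push_neg at hf
    obtain ⟨i, j, hfij, hij⟩ := hf.2
    rw [Matrix.det_zero_of_column_eq hij fun k => by simp [hfij], zero_mul]
  rw [h2, add_zero]
  have key : ∑ f ∈ Finset.univ.filter (fun f : Fin r → Fin n => Injective f),
      (A.submatrix id f).det * ∏ i, B (f i) i
      = ∑ x : {s : Finset (Fin n) // s.card = r} × Equiv.Perm (Fin r),
        (A.submatrix id ((x.1.1.orderEmbOfFin x.1.2) ∘ x.2)).det *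
          ∏ i, B ((x.1.1.orderEmbOfFin x.1.2) (x.2 i)) i := by
    refine Finset.sum_bij' (fun f hf => ((⟨Finset.univ.image f, hcard f (Finset.mem_filter.mp hf).2⟩ : {s : Finset (Fin n) // s.card = r}), permOf f))
      (fun x _ => (x.1.1.orderEmbOfFin x.1.2) ∘ x.2) ?_ ?_ ?_ ?_ ?_
    · intro x _; exact Finset.mem_univ _
    · intro x _
      simp only [Finset.mem_filter, Finset.mem_univ, true_and]
      exact ((x.1.1.orderEmbOfFin x.1.2).injective).comp x.2.injective
    · -- j (i f) = f
      intro f hf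
      funext p
      exact permOf_spec (Finset.mem_filter.mp hf).2 p
    · -- i (j x) = x
      rintro ⟨⟨L, hL⟩, σ⟩ _
      have him := image_orderEmbOfFin_comp hL σ
      have hinj : Injective ((L.orderEmbOfFin hL) ∘ σ) :=
        ((L.orderEmbOfFin hL).injective).comp σ.injective
      have hspec := permOf_spec hinj
      have heq : ∀ p, L.orderEmbOfFin hL (permOf ((L.orderEmbOfFin hL) ∘ σ) p)
          = L.orderEmbOfFin hL (σ p) := by
        intro p
        have h1 := orderEmbOfFin_congr him (hcard _ hinj)
          (permOf (⇑(L.orderEmbOfFin hL) ∘ ⇑σ) p)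
        rw [← h1]
        exact hspec p
      have hperm : permOf ((L.orderEmbOfFin hL) ∘ σ) = σ :=
        Equiv.ext fun p => (L.orderEmbOfFin hL).injective (heq p)
      refine Prod.ext ?_ ?_
      · ext : 1; simp [him]
      · simp [hperm]
    · intro f hf
      have hfi := (Finset.mem_filter.mp hf).2
      have hspec := permOf_spec hfi
      congr 1
      · rw [show ⇑((Finset.univ.image f).orderEmbOfFin (hcard f hfi)) ∘ ⇑(permOf f) = f from
          funext hspec]
      · exact Finset.prod_congr rfl fun p _ => by rw [hspec p]
  rw [key, Fintype.sum_prod_type]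
  refine Finset.sum_congr rfl fun L _ => ?_
  rw [Matrix.det_apply' (B.submatrix (L.1.orderEmbOfFin L.2) id), Finset.mul_sum]
  refine (Finset.sum_congr rfl fun σ _ => ?_).symm
  have hsub : A.submatrix id ((L.1.orderEmbOfFin L.2) ∘ σ)
      = (A.submatrix id (L.1.orderEmbOfFin L.2)).submatrix id σ := by
    rw [Matrix.submatrix_submatrix]; rfl
  rw [hsub, Matrix.det_permute']
  simp only [Matrix.submatrix_apply, id_eq]
  ring



def invCount {N n : ℕ} (g : Fin N → Fin n) : ℕ :=
  (Finset.univ.filter (fun P : Fin N × Fin N => P.1 < P.2 ∧ g P.2 < g P.1)).card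

lemma swap_lt {N : ℕ} {a b x y : Fin N} (hab : (a:ℕ)+1 = b) (hxy : x < y)
    (hne : ¬(x = a ∧ y = b)) : Equiv.swap a b x < Equiv.swap a b y := by
  rw [Equiv.swap_apply_def, Equiv.swap_apply_def]
  split_ifs <;> (simp only [Fin.lt_def, Fin.ext_iff] at *) <;> omega

lemma invCount_swap {N n : ℕ} (g : Fin N → Fin n) (a b : Fin N) (hab : (a:ℕ)+1 = b)
    (hg : g b < g a) : invCount (g ∘ Equiv.swap a b) + 1 = invCount g := by
  classical
  have hab' : a < b := by rw [Fin.lt_def]; omega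
  have hmem : (a, b) ∈ Finset.univ.filter (fun P : Fin N × Fin N => P.1 < P.2 ∧ g P.2 < g P.1) := by
    simp only [Finset.mem_filter, Finset.mem_univ, true_and]
    exact ⟨hab', hg⟩
  have hcard : invCount (g ∘ Equiv.swap a b)
      = ((Finset.univ.filter fun P : Fin N × Fin N => P.1 < P.2 ∧ g P.2 < g P.1).erase (a,b)).card := by
    refine Finset.card_bij' (fun P _ => (Equiv.swap a b P.1, Equiv.swap a b P.2))
      (fun Q _ => (Equiv.swap a b Q.1, Equiv.swap a b Q.2)) ?_ ?_ ?_ ?_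
    · intro P hP
      simp only [Finset.mem_filter, Finset.mem_univ, true_and, Function.comp_apply] at hP
      obtain ⟨h1, h2⟩ := hP
      have hPne : ¬(P.1 = a ∧ P.2 = b) := by
        rintro ⟨ha, hb⟩
        rw [ha, hb, Equiv.swap_apply_left, Equiv.swap_apply_right] at h2
        exact lt_asymm hg h2
      refine Finset.mem_erase.mpr ⟨?_, ?_⟩
      · intro heq
        rw [Prod.ext_iff] at heq
        have e1 : P.1 = b := by
          have := congrArg (Equiv.swap a b) heq.1
          rwa [Equiv.swap_apply_self, Equiv.swap_apply_left] at this
        have e2 : P.2 = a := by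
          have := congrArg (Equiv.swap a b) heq.2
          rwa [Equiv.swap_apply_self, Equiv.swap_apply_right] at this
        rw [e1, e2] at h1
        exact lt_asymm hab' h1
      · simp only [Finset.mem_filter, Finset.mem_univ, true_and]
        exact ⟨swap_lt hab h1 hPne, h2⟩
    · intro Q hQ
      rw [Finset.mem_erase] at hQ
      obtain ⟨hne, hQf⟩ := hQ
      simp only [Finset.mem_filter, Finset.mem_univ, true_and] at hQf
      obtain ⟨h1, h2⟩ := hQf
      have hQne : ¬(Q.1 = a ∧ Q.2 = b) := by
        rintro ⟨ha, hb⟩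
        exact hne (Prod.ext ha hb)
      simp only [Finset.mem_filter, Finset.mem_univ, true_and, Function.comp_apply,
        Equiv.swap_apply_self]
      exact ⟨swap_lt hab h1 hQne, h2⟩
    · intro P _; simp [Equiv.swap_apply_self]
    · intro Q _; simp [Equiv.swap_apply_self]
  rw [hcard, Finset.card_erase_of_mem hmem, invCount]
  have hpos : 0 < (Finset.univ.filter fun P : Fin N × Fin N => P.1 < P.2 ∧ g P.2 < g P.1).card :=
    Finset.card_pos.mpr ⟨_, hmem⟩
  omega

lemma det_submatrix_sign {N n : ℕ} (B : Matrix (Fin n) (Fin N) ℝ) :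
    ∀ (c : ℕ) (g : Fin N → Fin n) (hg : Function.Injective g), invCount g = c →
    (B.submatrix g id).det = (-1 : ℝ) ^ (invCount g) *
      (B.submatrix ((Finset.univ.image g).orderEmbOfFin (hcard g hg)) id).det := by
  intro c
  induction c using Nat.strong_induction_on with
  | _ c IH =>
    intro g hg hc
    by_cases hmono : StrictMono g
    · have h0 : invCount g = 0 := by
        rw [invCount, Finset.card_eq_zero, Finset.filter_eq_empty_iff]
        rintro P -
        rintro ⟨h1, h2⟩
        exact lt_asymm (hmono h1) h2
      have hgeq : ⇑((Finset.univ.image g).orderEmbOfFin (hcard g hg)) = g :=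
        (Finset.orderEmbOfFin_unique (hcard g hg)
          (fun x => Finset.mem_image_of_mem g (Finset.mem_univ x)) hmono).symm
      rw [h0, pow_zero, one_mul, hgeq]
    · match N, g, hg, hmono with
      | 0, g, hg, hmono => exact absurd (fun p q h => p.elim0) hmono
      | (N'+1), g, hg, hmono =>
        rw [Fin.strictMono_iff_lt_succ] at hmono
        push_neg at hmono
        obtain ⟨i, hi⟩ := hmono
        have hne : g i.succ ≠ g (i.castSucc) := fun h => (Fin.castSucc_lt_succ : i.castSucc < i.succ).ne (hg h.symm)
        have hdesc : g i.succ < g (i.castSucc) := lt_of_le_of_ne hi hne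
        set a := i.castSucc with ha
        set b := i.succ with hb
        have hab : (a : ℕ) + 1 = b := by simp [ha, hb]
        have hswap := invCount_swap g a b hab hdesc
        have hg' : Function.Injective (g ∘ Equiv.swap a b) :=
          hg.comp (Equiv.swap a b).injective
        have him : Finset.univ.image (g ∘ Equiv.swap a b) = Finset.univ.image g := by
          ext y
          simp only [Finset.mem_image, Finset.mem_univ, true_and, Function.comp_apply]
          constructor
          · rintro ⟨x, rfl⟩; exact ⟨Equiv.swap a b x, rfl⟩
          · rintro ⟨x, rfl⟩; exact ⟨Equiv.swap a b x, by rw [Equiv.swap_apply_self]⟩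
        have IH' := IH (invCount (g ∘ Equiv.swap a b)) (by omega) _ hg' rfl
        have hdet : (B.submatrix (g ∘ Equiv.swap a b) id).det = - (B.submatrix g id).det := by
          have hsub : B.submatrix (g ∘ (Equiv.swap a b)) id
              = (B.submatrix g id).submatrix (Equiv.swap a b) id := by
            rw [Matrix.submatrix_submatrix]; rfl
          rw [hsub, Matrix.det_permute, Equiv.Perm.sign_swap (Fin.castSucc_lt_succ : i.castSucc < i.succ).ne]
          simp
        have hembeq : ∀ p, ((Finset.univ.image (g ∘ Equiv.swap a b)).orderEmbOfFin
            (hcard _ hg')) p = ((Finset.univ.image g).orderEmbOfFin (hcard g hg)) p := by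
          intro p
          exact orderEmbOfFin_congr him _ p
        have hembeq' : (B.submatrix (⇑((Finset.univ.image (g ∘ Equiv.swap a b)).orderEmbOfFin
            (hcard _ hg'))) id) = (B.submatrix (⇑((Finset.univ.image g).orderEmbOfFin
            (hcard g hg))) id) := by
          rw [show ⇑((Finset.univ.image (g ∘ Equiv.swap a b)).orderEmbOfFin (hcard _ hg'))
            = ⇑((Finset.univ.image g).orderEmbOfFin (hcard g hg)) from funext hembeq]
        rw [hembeq'] at IH'
        have : (B.submatrix g id).det = - (B.submatrix (g ∘ Equiv.swap a b) id).det := by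
          rw [hdet, neg_neg]
        rw [this, IH']
        rw [← hswap]
        ring




-- pairing invariance
lemma pair_inv {r n : ℕ} (A : Matrix (Fin r) (Fin n) ℝ) (B : Matrix (Fin n) (Fin r) ℝ)
    {e g : Fin r → Fin n} (he : Injective e) (hg : Injective g)
    (hr : Set.range g = Set.range e) :
    (A.submatrix id e).det * (B.submatrix e id).det
      = (A.submatrix id g).det * (B.submatrix g id).det := by
  let σ : Equiv.Perm (Fin r) :=
    (Equiv.ofInjective g hg).trans ((Equiv.setCongr hr).trans (Equiv.ofInjective e he).symm)
  have hcomp : ∀ p, e (σ p) = g p := fun p => by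
    simp only [σ, Equiv.trans_apply, Equiv.setCongr_apply]
    rw [Equiv.apply_ofInjective_symm he]
    simp
  have hA : A.submatrix id g = (A.submatrix id e).submatrix id σ := by
    rw [Matrix.submatrix_submatrix]
    exact congrArg (A.submatrix _) (funext fun p => (hcomp p).symm)
  have hB : B.submatrix g id = (B.submatrix e id).submatrix σ id := by
    rw [Matrix.submatrix_submatrix]
    exact congrArg (fun f => B.submatrix f (id ∘ id)) (funext fun p => (hcomp p).symm)
  rw [hA, hB, Matrix.det_permute, Matrix.det_permute']
  rcases Int.units_eq_one_or (Equiv.Perm.sign σ) with h | h <;> rw [h] <;> push_cast <;> ring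

lemma fin_cases_add {k m : ℕ} (p : Fin (k+m)) :
    (∃ a : Fin k, p = Fin.castAdd m a) ∨ (∃ b : Fin m, p = Fin.natAdd k b) := by
  by_cases h : (p : ℕ) < k
  · exact Or.inl ⟨⟨p, h⟩, by apply Fin.ext; simp⟩
  · refine Or.inr ⟨⟨(p : ℕ) - k, by have := p.isLt; omega⟩, by apply Fin.ext; simp; omega⟩





lemma card_filter_lt {m n : ℕ} (I : Finset (Fin n)) (hI : I.card = m) (x : Fin n) :
    (Finset.univ.filter (fun b : Fin m => I.orderEmbOfFin hI b < x)).card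
      = (I.filter (· < x)).card := by
  refine Finset.card_bij' (fun b _ => I.orderEmbOfFin hI b)
    (fun y hy => (I.orderIsoOfFin hI).symm ⟨y, (Finset.mem_filter.mp hy).1⟩) ?_ ?_ ?_ ?_
  · intro b hb
    simp only [Finset.mem_filter, Finset.mem_univ, true_and] at hb ⊢
    exact ⟨Finset.orderEmbOfFin_mem I hI b, hb⟩
  · intro y hy
    simp only [Finset.mem_filter, Finset.mem_univ, true_and]
    have hkey : (I.orderEmbOfFin hI) ((I.orderIsoOfFin hI).symm ⟨y, (Finset.mem_filter.mp hy).1⟩)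
        = y := by
      rw [← Finset.coe_orderIsoOfFin_apply, OrderIso.apply_symm_apply]
    rw [hkey]
    exact (Finset.mem_filter.mp hy).2
  · intro b _
    apply (I.orderIsoOfFin hI).injective
    apply Subtype.ext
    rw [OrderIso.apply_symm_apply]
    exact (Finset.coe_orderIsoOfFin_apply I hI b).symm
  · intro y hy
    show (I.orderEmbOfFin hI) _ = y
    rw [← Finset.coe_orderIsoOfFin_apply, OrderIso.apply_symm_apply]

lemma invCount_addCases {k m n : ℕ} (I J : Finset (Fin n)) (hI : I.card = m) (hJ : J.card = k) :
    invCount (fun p : Fin (k+m) => Fin.addCases (motive := fun _ => Fin n)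
      (fun a => J.orderEmbOfFin hJ a) (fun b => I.orderEmbOfFin hI b) p)
    = ∑ a : Fin k, (I.filter (· < J.orderEmbOfFin hJ a)).card := by
  classical
  set g : Fin (k+m) → Fin n := fun p => Fin.addCases (motive := fun _ => Fin n)
      (fun a => J.orderEmbOfFin hJ a) (fun b => I.orderEmbOfFin hI b) p with hg
  have hgl : ∀ a : Fin k, g (Fin.castAdd m a) = J.orderEmbOfFin hJ a := fun a => by
    simp [hg]
  have hgr : ∀ b : Fin m, g (Fin.natAdd k b) = I.orderEmbOfFin hI b := fun b => by
    simp [hg]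
  have hS : (Finset.univ.filter (fun P : Fin (k+m) × Fin (k+m) => P.1 < P.2 ∧ g P.2 < g P.1))
      = Finset.image (fun ab : Fin k × Fin m => (Fin.castAdd m ab.1, Fin.natAdd k ab.2))
        (Finset.univ.filter
          (fun ab : Fin k × Fin m => I.orderEmbOfFin hI ab.2 < J.orderEmbOfFin hJ ab.1)) := by
    ext P
    simp only [Finset.mem_filter, Finset.mem_image, Finset.mem_univ, true_and]
    constructor
    · rintro ⟨h1, h2⟩
      rcases fin_cases_add P.1 with ⟨a, ha⟩ | ⟨b, hb⟩
      · rcases fin_cases_add P.2 with ⟨a', ha'⟩ | ⟨b', hb'⟩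
        · exfalso
          rw [ha, ha'] at h1 h2
          rw [hgl, hgl] at h2
          have haa : a < a' := by
            rw [Fin.lt_def] at h1 ⊢; simpa using h1
          exact lt_asymm ((J.orderEmbOfFin hJ).strictMono haa) h2
        · refine ⟨(a, b'), ?_, ?_⟩
          · have h2' := h2
            rw [ha, hb', hgl, hgr] at h2'
            exact h2'
          · symm
            exact Prod.ext_iff.mpr ⟨ha, hb'⟩
      · exfalso
        rcases fin_cases_add P.2 with ⟨a', ha'⟩ | ⟨b', hb'⟩
        · rw [hb, ha'] at h1
          rw [Fin.lt_def] at h1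
          simp only [Fin.coe_natAdd, Fin.coe_castAdd] at h1
          have := a'.isLt
          omega
        · rw [hb, hb'] at h1 h2
          rw [hgr, hgr] at h2
          have hbb : b < b' := by
            rw [Fin.lt_def] at h1 ⊢; simpa using h1
          exact lt_asymm ((I.orderEmbOfFin hI).strictMono hbb) h2
    · rintro ⟨⟨a, b⟩, hab, rfl⟩
      refine ⟨?_, ?_⟩
      · rw [Fin.lt_def]
        simp only [Fin.coe_castAdd, Fin.coe_natAdd]
        have := a.isLt
        omega
      · show g (Fin.natAdd k b) < g (Fin.castAdd m a)
        rw [hgl, hgr]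
        exact hab
  have hembinj : Injective (fun ab : Fin k × Fin m => (Fin.castAdd m ab.1, Fin.natAdd k ab.2)) := by
    intro x y h
    rw [Prod.ext_iff] at h
    have h1 : (x.1 : ℕ) = (y.1 : ℕ) := by
      have := congrArg (fun z : Fin (k+m) => (z : ℕ)) h.1
      simpa using this
    have h2 : (x.2 : ℕ) = (y.2 : ℕ) := by
      have := congrArg (fun z : Fin (k+m) => (z : ℕ)) h.2
      simpa using this
    exact Prod.ext_iff.mpr ⟨Fin.ext h1, Fin.ext h2⟩
  rw [invCount, hS, Finset.card_image_of_injective _ hembinj]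
  rw [Finset.card_eq_sum_card_fiberwise
    (f := fun ab : Fin k × Fin m => ab.1) (t := Finset.univ) (fun x _ => Finset.mem_univ _)]
  refine Finset.sum_congr rfl fun a _ => ?_
  rw [← card_filter_lt I hI (J.orderEmbOfFin hJ a)]
  refine Finset.card_bij' (fun ab _ => ab.2) (fun b _ => (a, b)) ?_ ?_ ?_ ?_
  · intro ab hab
    simp only [Finset.mem_filter, Finset.mem_univ, true_and] at hab ⊢
    obtain ⟨h1, h2⟩ := hab
    rw [← h2]
    exact h1
  · intro b hb
    simp only [Finset.mem_filter, Finset.mem_univ, true_and] at hb ⊢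
    exact ⟨hb, trivial⟩
  · intro ab hab
    simp only [Finset.mem_filter, Finset.mem_univ, true_and] at hab
    exact Prod.ext_iff.mpr ⟨hab.2.symm, rfl⟩
  · intro b _
    rfl



end Ampl

namespace Ampl

lemma even_c_add {n : ℕ} (I : Finset (Fin n))
    (heven : ∀ i i' : Fin n, i ∉ I → i' ∉ I → i < i' →
      Even ((I.filter (fun x => i < x ∧ x < i')).card))
    {x y : Fin n} (hx : x ∉ I) (hy : y ∉ I) :
    Even ((I.filter (· < x)).card + (I.filter (· < y)).card) := by
  classical
  have key : ∀ u v : Fin n, u ∉ I → v ∉ I → u < v →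
      (I.filter (· < v)).card
        = (I.filter (· < u)).card + (I.filter (fun z => u < z ∧ z < v)).card := by
    intro u v hu hv huv
    have hdisj : Disjoint (I.filter (· < u)) (I.filter (fun z => u < z ∧ z < v)) := by
      rw [Finset.disjoint_left]
      intro z hz1 hz2
      simp only [Finset.mem_filter] at hz1 hz2
      exact lt_asymm hz1.2 hz2.2.1
    rw [← Finset.card_union_of_disjoint hdisj]
    congr 1
    ext z
    simp only [Finset.mem_filter, Finset.mem_union]
    constructor
    · rintro ⟨hz, hzv⟩
      rcases lt_trichotomy z u with h|h|h
      · exact Or.inl ⟨hz, h⟩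
      · exact absurd (h ▸ hz) hu
      · exact Or.inr ⟨hz, h, hzv⟩
    · rintro (⟨hz, hzu⟩|⟨hz, _, hzv⟩)
      · exact ⟨hz, lt_trans hzu huv⟩
      · exact ⟨hz, hzv⟩
  rcases lt_trichotomy x y with h|h|h
  · obtain ⟨t, ht⟩ := heven x y hx hy h
    rw [key x y hx hy h]
    exact ⟨(I.filter (· < x)).card + t, by omega⟩
  · rw [h]
    exact ⟨(I.filter (· < y)).card, rfl⟩
  · obtain ⟨t, ht⟩ := heven y x hy hx h
    rw [key y x hy hx h]
    exact ⟨(I.filter (· < y)).card + t, by omega⟩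

lemma det_block {k m n : ℕ} (X : Matrix (Fin k) (Fin n) ℝ) (I J : Finset (Fin n))
    (hI : I.card = m) (hJ : J.card = k) (hdisj : ∀ b : Fin m, I.orderEmbOfFin hI b ∉ J) :
    ((Matrix.of fun (p : Fin (k+m)) (q : Fin n) => Fin.addCases (motive := fun _ => ℝ)
        (fun p₁ => X p₁ q) (fun p₂ => if q = I.orderEmbOfFin hI p₂ then 1 else 0) p).submatrix
      id (fun p => Fin.addCases (motive := fun _ => Fin n)
        (fun a => J.orderEmbOfFin hJ a) (fun b => I.orderEmbOfFin hI b) p)).det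
    = (X.submatrix id (fun s => J.orderEmbOfFin hJ s)).det := by
  rw [← Matrix.det_submatrix_equiv_self finSumFinEquiv]
  have hblock : ((Matrix.of fun (p : Fin (k+m)) (q : Fin n) => Fin.addCases (motive := fun _ => ℝ)
        (fun p₁ => X p₁ q) (fun p₂ => if q = I.orderEmbOfFin hI p₂ then 1 else 0) p).submatrix
      id (fun p => Fin.addCases (motive := fun _ => Fin n)
        (fun a => J.orderEmbOfFin hJ a) (fun b => I.orderEmbOfFin hI b) p)).submatrix
      finSumFinEquiv finSumFinEquiv
      = Matrix.fromBlocks (X.submatrix id (fun s => J.orderEmbOfFin hJ s))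
          (X.submatrix id (fun b => I.orderEmbOfFin hI b)) 0 1 := by
    ext pq qq
    rcases pq with a | b <;> rcases qq with a' | b'
    · simp [finSumFinEquiv_apply_left, Fin.addCases_left]
    · simp [finSumFinEquiv_apply_left, finSumFinEquiv_apply_right,
        Fin.addCases_left, Fin.addCases_right]
    · simp only [Matrix.submatrix_apply, finSumFinEquiv_apply_left, finSumFinEquiv_apply_right,
        id_eq, Matrix.of_apply, Fin.addCases_left, Fin.addCases_right,
        Matrix.fromBlocks_apply₂₁, Matrix.zero_apply]
      rw [if_neg]
      intro hcontra
      exact hdisj b (hcontra ▸ Finset.orderEmbOfFin_mem J hJ a')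
    · simp only [Matrix.submatrix_apply, finSumFinEquiv_apply_right, id_eq, Matrix.of_apply,
        Fin.addCases_right, Matrix.fromBlocks_apply₂₂, Matrix.one_apply]
      by_cases hbb : b = b'
      · subst hbb; simp
      · rw [if_neg (fun hcontra => hbb ((I.orderEmbOfFin hI).injective hcontra).symm),
          if_neg hbb]
  rw [hblock, Matrix.det_fromBlocks_zero₂₁]
  simp

end Ampl

/-- Facet functionals of the amplituhedron have a fixed sign: with `r = k + m`, `Z` an
`n × r` matrix with positive `r × r` minors, and `I` an `m`-element subset of `{1,…,n}`
satisfying the evenness condition, the determinant of the `r × r` matrix whose first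
`k` rows are `X·Z` and last `m` rows are the rows of `Z` indexed by `I` has, up to a
global sign `ε`, a nonnegative value on all of `Gr(k,n)_{≥0}`. -/
theorem amplituhedron_facet_fixed_sign {k m n : ℕ} (hrn : k + m ≤ n)
    (Z : Matrix (Fin n) (Fin (k + m)) ℝ)
    (hZ : ∀ (L : Finset (Fin n)) (h : L.card = k + m),
      0 < (Z.submatrix (fun s => L.orderEmbOfFin h s) id).det)
    (I : Finset (Fin n)) (hI : I.card = m)
    (heven : ∀ i i' : Fin n, i ∉ I → i' ∉ I → i < i' →
      Even ((I.filter (fun x => i < x ∧ x < i')).card)) :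
    ∃ ε : ℝ, (ε = 1 ∨ ε = -1) ∧
      ∀ X : Matrix (Fin k) (Fin n) ℝ,
        (∀ J : Finset (Fin n), J.card = k → 0 ≤ plk X J) →
        0 ≤ ε * (Matrix.of fun (p q : Fin (k + m)) =>
          Fin.addCases (motive := fun _ => ℝ)
            (fun p₁ : Fin k => (X * Z) p₁ q)
            (fun p₂ : Fin m => Z (I.orderEmbOfFin hI p₂) q) p).det := by
  classical
  set ε : ℝ := (if h : ∃ j : Fin n, j ∉ I then
      (-1 : ℝ)^(k * (I.filter (· < h.choose)).card) else 1) with hε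
  refine ⟨ε, ?_, ?_⟩
  · rw [hε]
    split_ifs with hex
    · rcases Nat.even_or_odd (k * (I.filter (· < hex.choose)).card) with he | ho
      · exact Or.inl he.neg_one_pow
      · exact Or.inr ho.neg_one_pow
    · exact Or.inl rfl
  · intro X hX
    set M : Matrix (Fin (k+m)) (Fin n) ℝ := Matrix.of fun p q =>
      Fin.addCases (motive := fun _ => ℝ) (fun p₁ => X p₁ q)
        (fun p₂ => if q = I.orderEmbOfFin hI p₂ then 1 else 0) p with hM
    have hMZ : (Matrix.of fun (p q : Fin (k + m)) =>
        Fin.addCases (motive := fun _ => ℝ)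
          (fun p₁ : Fin k => (X * Z) p₁ q)
          (fun p₂ : Fin m => Z (I.orderEmbOfFin hI p₂) q) p) = M * Z := by
      ext p q
      rcases Ampl.fin_cases_add p with ⟨a, rfl⟩ | ⟨b, rfl⟩
      · simp only [Matrix.of_apply, Fin.addCases_left]
        rw [Matrix.mul_apply, Matrix.mul_apply]
        refine Finset.sum_congr rfl fun j _ => ?_
        simp [hM]
      · simp only [Matrix.of_apply, Fin.addCases_right]
        rw [Matrix.mul_apply]
        have hterm : ∀ j, M (Fin.natAdd k b) j * Z j q
            = (if j = I.orderEmbOfFin hI b then 1 else 0) * Z j q := fun j => by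
          simp [hM]
        rw [Finset.sum_congr rfl fun j _ => hterm j]
        simp [ite_mul]
    rw [hMZ, Ampl.cauchyBinet, Finset.mul_sum]
    refine Finset.sum_nonneg fun L _ => ?_
    by_cases hIL : I ⊆ L.1
    · set J : Finset (Fin n) := L.1 \ I with hJdef
      have hJcard : J.card = k := by
        rw [hJdef, Finset.card_sdiff_of_subset hIL, hI, L.2]
        omega
      set g : Fin (k+m) → Fin n := fun p => Fin.addCases (motive := fun _ => Fin n)
        (fun a => J.orderEmbOfFin hJcard a) (fun b => I.orderEmbOfFin hI b) p with hg
      have hgl : ∀ a : Fin k, g (Fin.castAdd m a) = J.orderEmbOfFin hJcard a := fun a => by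
        simp [hg]
      have hgr : ∀ b : Fin m, g (Fin.natAdd k b) = I.orderEmbOfFin hI b := fun b => by
        simp [hg]
      have hJI : ∀ a : Fin k, J.orderEmbOfFin hJcard a ∉ I := fun a =>
        (Finset.mem_sdiff.mp (by rw [← hJdef]; exact Finset.orderEmbOfFin_mem J hJcard a)).2
      have hJL : ∀ a : Fin k, J.orderEmbOfFin hJcard a ∈ L.1 := fun a =>
        (Finset.mem_sdiff.mp (by rw [← hJdef]; exact Finset.orderEmbOfFin_mem J hJcard a)).1
      have hginj : Function.Injective g := by
        intro p q hpq
        rcases Ampl.fin_cases_add p with ⟨a, rfl⟩ | ⟨b, rfl⟩ <;>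
          rcases Ampl.fin_cases_add q with ⟨a', rfl⟩ | ⟨b', rfl⟩
        · rw [hgl, hgl] at hpq
          rw [(J.orderEmbOfFin hJcard).injective hpq]
        · rw [hgl, hgr] at hpq
          exact absurd (hpq ▸ Finset.orderEmbOfFin_mem I hI b') (hJI a)
        · rw [hgr, hgl] at hpq
          exact absurd (hpq.symm ▸ Finset.orderEmbOfFin_mem I hI b) (hJI a')
        · rw [hgr, hgr] at hpq
          rw [(I.orderEmbOfFin hI).injective hpq]
      have hrange : Set.range g = Set.range ⇑(L.1.orderEmbOfFin L.2) := by
        rw [Finset.range_orderEmbOfFin]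
        ext x
        constructor
        · rintro ⟨p, rfl⟩
          rcases Ampl.fin_cases_add p with ⟨a, rfl⟩ | ⟨b, rfl⟩
          · rw [hgl]
            exact Finset.mem_coe.mpr (hJL a)
          · rw [hgr]
            exact Finset.mem_coe.mpr (hIL (Finset.orderEmbOfFin_mem I hI b))
        · intro hx
          by_cases hxI : x ∈ I
          · have hxr : x ∈ Set.range ⇑(I.orderEmbOfFin hI) := by
              rw [Finset.range_orderEmbOfFin]; exact hxI
            obtain ⟨b, rfl⟩ := hxr
            exact ⟨Fin.natAdd k b, hgr b⟩
          · have hxJ : x ∈ J := by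
              rw [hJdef]
              exact Finset.mem_sdiff.mpr ⟨Finset.mem_coe.mp hx, hxI⟩
            have hxr : x ∈ Set.range ⇑(J.orderEmbOfFin hJcard) := by
              rw [Finset.range_orderEmbOfFin]; exact hxJ
            obtain ⟨a, rfl⟩ := hxr
            exact ⟨Fin.castAdd m a, hgl a⟩
      have hpair := Ampl.pair_inv M Z (L.1.orderEmbOfFin L.2).injective hginj hrange
      rw [hpair]
      have hdetM : (M.submatrix id g).det
          = (X.submatrix id (fun s => J.orderEmbOfFin hJcard s)).det := by
        rw [hM, hg]
        exact Ampl.det_block X I J hI hJcard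
          (fun b hb => (Finset.mem_sdiff.mp (by rw [← hJdef]; exact hb)).2
            (Finset.orderEmbOfFin_mem I hI b))
      have himg : Finset.univ.image g = L.1 := by
        apply Finset.coe_injective
        rw [Finset.coe_image, Finset.coe_univ, Set.image_univ, hrange,
          Finset.range_orderEmbOfFin]
      have hsign := Ampl.det_submatrix_sign Z (Ampl.invCount g) g hginj rfl
      have hembfun : ⇑((Finset.univ.image g).orderEmbOfFin (Ampl.hcard g hginj))
          = ⇑(L.1.orderEmbOfFin L.2) :=
        funext fun p => Ampl.orderEmbOfFin_congr himg _ p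
      rw [hembfun] at hsign
      have hZpos : 0 < (Z.submatrix (⇑(L.1.orderEmbOfFin L.2)) id).det := hZ L.1 L.2
      have hplk : 0 ≤ (X.submatrix id (fun s => J.orderEmbOfFin hJcard s)).det := by
        have hXJ := hX J hJcard
        rwa [plk, dif_pos hJcard] at hXJ
      have hinv : Ampl.invCount g
          = ∑ a : Fin k, (I.filter (· < J.orderEmbOfFin hJcard a)).card := by
        rw [hg]
        exact Ampl.invCount_addCases I J hI hJcard
      have hεg : ε = (-1 : ℝ)^(Ampl.invCount g) := by
        rw [hε]
        split_ifs with hex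
        · have hj0 := hex.choose_spec
          have hEven : Even (k * (I.filter (· < hex.choose)).card + Ampl.invCount g) := by
            have hconst : k * (I.filter (· < hex.choose)).card
                = ∑ _a : Fin k, (I.filter (· < hex.choose)).card := by
              rw [Finset.sum_const, Finset.card_univ, Fintype.card_fin, smul_eq_mul]
            rw [hinv, hconst, ← Finset.sum_add_distrib]
            refine Finset.sum_induction _ Even (fun a b ha hb => ha.add hb) Even.zero ?_
            intro a _
            exact Ampl.even_c_add I heven hj0 (hJI a)
          rcases Nat.even_or_odd (k * (I.filter (· < hex.choose)).card) with h1 | h1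
          · have h2 : Even (Ampl.invCount g) := (Nat.even_add.mp hEven).mp h1
            rw [h1.neg_one_pow, h2.neg_one_pow]
          · have h2 : Odd (Ampl.invCount g) := by
              rcases Nat.even_or_odd (Ampl.invCount g) with h3 | h3
              · exact absurd ((Nat.even_add.mp hEven).mpr h3) (Nat.not_even_iff_odd.mpr h1)
              · exact h3
            rw [h1.neg_one_pow, h2.neg_one_pow]
        · push_neg at hex
          have hJempty : J = ∅ := Finset.eq_empty_of_forall_notMem fun x hx =>
            (Finset.mem_sdiff.mp (by rw [← hJdef]; exact hx)).2 (hex x)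
          have hk0 : k = 0 := by
            have hcc := hJcard
            rw [hJempty] at hcc
            simpa using hcc.symm
          have hz : Ampl.invCount g = 0 := by
            rw [hinv]
            refine Finset.sum_eq_zero fun a _ => ?_
            exact absurd a.isLt (by omega)
          rw [hz, pow_zero]
      have hsq : (-1 : ℝ)^(Ampl.invCount g) * (-1 : ℝ)^(Ampl.invCount g) = 1 := by
        rw [← pow_add]
        exact Even.neg_one_pow ⟨Ampl.invCount g, rfl⟩
      have hfinal : ε * ((M.submatrix id g).det * (Z.submatrix g id).det)
          = (X.submatrix id (fun s => J.orderEmbOfFin hJcard s)).det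
            * (Z.submatrix (⇑(L.1.orderEmbOfFin L.2)) id).det := by
        rw [hdetM, hsign, hεg]
        rw [show ((-1:ℝ)^(Ampl.invCount g)) *
            ((X.submatrix id (fun s => J.orderEmbOfFin hJcard s)).det *
              ((-1:ℝ)^(Ampl.invCount g) *
                (Z.submatrix (⇑(L.1.orderEmbOfFin L.2)) id).det))
            = (((-1:ℝ)^(Ampl.invCount g)) * ((-1:ℝ)^(Ampl.invCount g))) *
              ((X.submatrix id (fun s => J.orderEmbOfFin hJcard s)).det *
                (Z.submatrix (⇑(L.1.orderEmbOfFin L.2)) id).det) from by ring,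
          hsq, one_mul]
      rw [hfinal]
      exact mul_nonneg hplk hZpos.le
    · obtain ⟨i, hiI, hiL⟩ := Finset.not_subset.mp hIL
      have hir : i ∈ Set.range ⇑(I.orderEmbOfFin hI) := by
        rw [Finset.range_orderEmbOfFin]; exact hiI
      obtain ⟨b, hb⟩ := hir
      have hdet0 : (M.submatrix id ⇑(L.1.orderEmbOfFin L.2)).det = 0 := by
        apply Matrix.det_eq_zero_of_row_eq_zero (Fin.natAdd k b)
        intro j
        simp only [Matrix.submatrix_apply, hM, Matrix.of_apply, Fin.addCases_right, id_eq]
        rw [if_neg]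
        intro hcontra
        exact hiL (by rw [← hb, ← hcontra]; exact Finset.orderEmbOfFin_mem L.1 L.2 j)
      rw [hdet0, zero_mul, mul_zero]
end
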